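/- arXiv:1108.2863 — 13 statements merged into one kernel-verified Lean document; each statement's English description precedes it below -/
import Mathlib

section
/- Let R be a ring and J(R) its Jacobson radical. Then the clique number of the unit graph of the quotient ring R/J(R) is at most the clique number of the unit graph of R, i.e., ω(G(R/J(R))) ≤ ω(G(R)). -/
def unitGraph (R : Type*) [Ring R] : SimpleGraph R where
  Adj a b := a ≠ b ∧ IsUnit (a + b)
  symm := ⟨fun a b ⟨h1, h2⟩ => ⟨h1.symm, add_comm a b ▸ h2⟩⟩
  loopless := ⟨fun _ ⟨h, _⟩ => h rfl⟩

noncomputable def ecliqueNum {V : Type*} (G : SimpleGraph V) : ℕ∞ :=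
  ⨆ s ∈ {s : Set V | G.IsClique s}, s.encard

noncomputable def eindepNum {V : Type*} (G : SimpleGraph V) : ℕ∞ :=
  ⨆ s ∈ {s : Set V | s.Pairwise fun a b => ¬ G.Adj a b}, s.encard

noncomputable def ringJacobson (R : Type*) [Ring R] : TwoSidedIdeal R :=
  (⊥ : TwoSidedIdeal R).jacobson

abbrev modJacobson (R : Type*) [Ring R] := (ringJacobson R).ringCon.Quotient

section aux
variable {R : Type*} [Ring R]

/-- `1 + j` is a unit for `j` in the Jacobson radical. -/
lemma aux_isUnit_one_add {j : R} (hj : j ∈ ringJacobson R) : IsUnit (1 + j) := by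
  have left : ∀ k ∈ ringJacobson R, ∃ z : R, z * (1 + k) = 1 := by
    intro k hk
    obtain ⟨z, hz⟩ := TwoSidedIdeal.mem_jacobson_iff.1 hk 1
    rw [TwoSidedIdeal.mem_bot, mul_one] at hz
    refine ⟨z, ?_⟩
    rw [mul_add, mul_one, add_comm]
    exact eq_of_sub_eq_zero hz
  obtain ⟨z, hz⟩ := left j hj
  have hz' : z = 1 + -(z * j) := by
    have h := hz
    rw [mul_add, mul_one] at h
    have h2 := eq_sub_of_add_eq h
    rwa [sub_eq_add_neg] at h2
  have hmem : -(z * j) ∈ ringJacobson R :=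
    (ringJacobson R).neg_mem ((ringJacobson R).mul_mem_left z j hj)
  obtain ⟨w, hw⟩ := left _ hmem
  rw [← hz'] at hw
  have hw' : w = 1 + j := by
    calc w = w * (z * (1 + j)) := by rw [hz, mul_one]
    _ = (w * z) * (1 + j) := (mul_assoc _ _ _).symm
    _ = 1 + j := by rw [hw, one_mul]
  exact ⟨⟨1 + j, z, hw' ▸ hw, hz⟩, rfl⟩

lemma aux_isUnit_of_quot {x : R}
    (h : IsUnit ((ringJacobson R).ringCon.mk' x)) : IsUnit x := by
  obtain ⟨u, hu⟩ := h
  obtain ⟨y, hy⟩ : ∃ y : R, (ringJacobson R).ringCon.mk' y = (↑u⁻¹ : modJacobson R) :=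
    Quotient.exists_rep _
  have hxy : x * y - 1 ∈ ringJacobson R := by
    rw [← TwoSidedIdeal.rel_iff]
    have : (ringJacobson R).ringCon.mk' (x * y) = (ringJacobson R).ringCon.mk' 1 := by
      rw [map_mul, map_one, ← hu, hy, u.mul_inv]
    exact Quotient.exact this
  have hyx : y * x - 1 ∈ ringJacobson R := by
    rw [← TwoSidedIdeal.rel_iff]
    have : (ringJacobson R).ringCon.mk' (y * x) = (ringJacobson R).ringCon.mk' 1 := by
      rw [map_mul, map_one, ← hu, hy, u.inv_mul]
    exact Quotient.exact this
  have h1 : IsUnit (x * y) := by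
    have := aux_isUnit_one_add hxy
    simpa using this
  have h2 : IsUnit (y * x) := by
    have := aux_isUnit_one_add hyx
    simpa using this
  obtain ⟨v, hv⟩ := h1
  obtain ⟨w, hw⟩ := h2
  refine ⟨⟨x, y * ↑v⁻¹, ?_, ?_⟩, rfl⟩
  · rw [← mul_assoc, ← hv, v.mul_inv]
  · have hleft : (↑w⁻¹ * y) * x = 1 := by rw [mul_assoc, ← hw, w.inv_mul]
    have heq : y * ↑v⁻¹ = ↑w⁻¹ * y := by
      calc y * ↑v⁻¹ = ((↑w⁻¹ * y) * x) * (y * ↑v⁻¹) := by rw [hleft, one_mul]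
      _ = (↑w⁻¹ * y) * ((x * y) * ↑v⁻¹) := by simp only [mul_assoc]
      _ = ↑w⁻¹ * y := by rw [← hv, v.mul_inv, mul_one]
    rw [heq, hleft]

end aux

/-- The clique number of the unit graph of `R/J(R)` is at most that of `G(R)`. -/
theorem ecliqueNum_unitGraph_modJacobson_le (R : Type*) [Ring R] :
    ecliqueNum (unitGraph (modJacobson R)) ≤ ecliqueNum (unitGraph R) := by
  unfold ecliqueNum
  refine iSup₂_le fun s hs => ?_
  set t : Set R := Quotient.out '' s with ht
  have htc : (unitGraph R).IsClique t := by
    rintro a ⟨x, hx, rfl⟩ b ⟨y, hy, rfl⟩ hab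
    have hxy : x ≠ y := fun h => hab (h ▸ rfl)
    obtain ⟨-, hu⟩ := hs hx hy hxy
    refine ⟨hab, ?_⟩
    apply aux_isUnit_of_quot
    have h1 : (ringJacobson R).ringCon.mk' (Quotient.out x) = x := Quotient.out_eq x
    have h2 : (ringJacobson R).ringCon.mk' (Quotient.out y) = y := Quotient.out_eq y
    rw [map_add, h1, h2]
    exact hu
  have hcard : t.encard = s.encard :=
    Set.InjOn.encard_image (fun a _ b _ h => Quotient.out_injective h)
  calc s.encard = t.encard := hcard.symm
  _ ≤ ⨆ s ∈ {s : Set R | (unitGraph R).IsClique s}, s.encard := le_biSup _ htc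
end

section
/- Let R be a ring and J(R) its Jacobson radical. Then the chromatic number of the unit graph of R/J(R) is at most the chromatic number of the unit graph of R, i.e., χ(G(R/J(R))) ≤ χ(G(R)). -/
/-- If `x` is in the Jacobson radical, then `1 + x` is a unit. -/
lemma isUnit_one_add_of_mem_jacobson {R : Type*} [Ring R] {x : R}
    (hx : x ∈ ringJacobson R) : IsUnit (1 + x) := by
  -- First get a left inverse `z` of `x + 1`.
  obtain ⟨z, hz⟩ := (TwoSidedIdeal.mem_jacobson_iff.1 hx) 1
  rw [TwoSidedIdeal.mem_bot, mul_one, sub_eq_zero] at hz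
  have hz1 : z * (x + 1) = 1 := by rw [mul_add, mul_one, hz]
  -- `z = 1 + (-(z * x))` with `-(z*x)` in the radical, so `z` has a left inverse `w`.
  have hzx : -(z * x) ∈ ringJacobson R := by
    exact TwoSidedIdeal.neg_mem _ (TwoSidedIdeal.mul_mem_left _ _ _ hx)
  obtain ⟨w, hw⟩ := (TwoSidedIdeal.mem_jacobson_iff.1 hzx) 1
  rw [TwoSidedIdeal.mem_bot, mul_one, sub_eq_zero] at hw
  have hwz : w * z = 1 := by
    have : w * (-(z * x) + 1) = 1 := by rw [mul_add, mul_one, hw]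
    have hz' : -(z * x) + 1 = z := by
      have := hz
      linear_combination (norm := noncomm_ring) -this
    rwa [hz'] at this
  -- Then `w = x + 1`, so `z` is a two-sided inverse of `x + 1`.
  have hwx : w = x + 1 := by
    calc w = w * (z * (x + 1)) := by rw [hz1, mul_one]
    _ = (w * z) * (x + 1) := by rw [mul_assoc]
    _ = x + 1 := by rw [hwz, one_mul]
  have : IsUnit (x + 1) := ⟨⟨x + 1, z, by rw [← hwx]; exact hwz, hz1⟩, rfl⟩
  rwa [add_comm] at this

/-- Units lift along the quotient by the Jacobson radical. -/
lemma isUnit_of_isUnit_map_modJacobson {R : Type*} [Ring R] {r : R}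
    (h : IsUnit ((ringJacobson R).ringCon.mk' r)) : IsUnit r := by
  set f := (ringJacobson R).ringCon.mk' with hf
  obtain ⟨v, hv⟩ := h
  obtain ⟨u, hu⟩ := (ringJacobson R).ringCon.mk'_surjective
    ((v⁻¹ : (modJacobson R)ˣ) : modJacobson R)
  replace hu : f u = ((v⁻¹ : (modJacobson R)ˣ) : modJacobson R) := hu
  have h1 : f (u * r) = 1 := by
    rw [map_mul, hu, ← hv, Units.inv_mul]
  have h2 : f (r * u) = 1 := by
    rw [map_mul, hu, ← hv, Units.mul_inv]
  have mem_of : ∀ s : R, f s = 1 → s - 1 ∈ ringJacobson R := by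
    intro s hs
    have h0 : (ringJacobson R).ringCon (s - 1) 0 := by
      rw [← RingCon.eq]
      show f (s - 1) = f 0
      rw [map_sub, hs, map_one, sub_self, map_zero]
    rwa [TwoSidedIdeal.mem_iff]
  have hur : IsUnit (u * r) := by
    have := isUnit_one_add_of_mem_jacobson (mem_of _ h1)
    rwa [add_sub_cancel] at this
  have hru : IsUnit (r * u) := by
    have := isUnit_one_add_of_mem_jacobson (mem_of _ h2)
    rwa [add_sub_cancel] at this
  obtain ⟨a, ha⟩ := hur
  obtain ⟨b, hb⟩ := hru
  -- left inverse of r : a⁻¹ * u ; right inverse of r : u * b⁻¹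
  have hl : ((a⁻¹ : (R)ˣ) : R) * u * r = 1 := by
    rw [mul_assoc, ← ha, Units.inv_mul]
  have hr : r * (u * ((b⁻¹ : (R)ˣ) : R)) = 1 := by
    rw [← mul_assoc, ← hb, Units.mul_inv]
  have heq : ((a⁻¹ : (R)ˣ) : R) * u = u * ((b⁻¹ : (R)ˣ) : R) := by
    calc ((a⁻¹ : (R)ˣ) : R) * u
        = (((a⁻¹ : (R)ˣ) : R) * u) * (r * (u * ((b⁻¹ : (R)ˣ) : R))) := by rw [hr, mul_one]
      _ = (((a⁻¹ : (R)ˣ) : R) * u * r) * (u * ((b⁻¹ : (R)ˣ) : R)) := by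
          noncomm_ring
      _ = u * ((b⁻¹ : (R)ˣ) : R) := by rw [hl, one_mul]
  exact ⟨⟨r, u * ((b⁻¹ : (R)ˣ) : R), hr, by rw [← heq]; exact hl⟩, rfl⟩

/-- The chromatic number of the unit graph of `R/J(R)` is at most that of `G(R)`. -/
theorem chromaticNumber_unitGraph_modJacobson_le (R : Type*) [Ring R] :
    (unitGraph (modJacobson R)).chromaticNumber ≤ (unitGraph R).chromaticNumber := by
  set f := (ringJacobson R).ringCon.mk' with hf
  have hsurj : Function.Surjective f := (ringJacobson R).ringCon.mk'_surjective
  set s : modJacobson R → R := Function.surjInv hsurj with hs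
  have hfs : ∀ x, f (s x) = x := Function.surjInv_eq hsurj
  have hom : unitGraph (modJacobson R) →g unitGraph R := by
    refine ⟨s, ?_⟩
    rintro x y ⟨hne, hu⟩
    constructor
    · intro hxy
      apply hne
      rw [← hfs x, ← hfs y, hxy]
    · apply isUnit_of_isUnit_map_modJacobson
      rw [map_add, hfs, hfs]
      exact hu
  apply SimpleGraph.chromaticNumber_le_of_forall_imp
  intro n hc
  obtain ⟨C⟩ := hc
  exact ⟨C.comp hom⟩
end

section
/- Let R be a left Artinian ring such that the quotient ring R/J(R) is finite. Then R is a finite ring. -/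
/-! ### Auxiliary material

We prove the theorem in several steps:
* the (left) Jacobson radical of a left Artinian ring is nilpotent;
* `R ⧸ J` is a semisimple `R`-module when it is finite;
* any Artinian `R`-module killed by `J` is finite;
* finiteness of `R` follows by climbing the filtration `J^k`.
-/

open Submodule LinearMap

section Aux

variable {R : Type*} [Ring R]

/-- The left Jacobson radical as a left ideal. -/
private abbrev Jrad (R : Type*) [Ring R] : Ideal R := Ideal.jacobson (⊥ : Ideal R)

private lemma jacBot_mul_right {x : R} (hx : x ∈ Jrad R) (r : R) :
    x * r ∈ Jrad R :=
  (Jrad R).mul_mem_right r hx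

private lemma eq_zero_of_jac {x a : R} (hx : x ∈ Jrad R)
    (ha : a = x * a) : a = 0 := by
  obtain ⟨z, hz⟩ := (Ideal.mem_jacobson_iff.mp hx) (-1)
  rw [Ideal.mem_bot, sub_eq_zero] at hz
  have h1 : -(z * x) + z = 1 := by rw [← hz]; noncomm_ring
  calc a = (-(z * x) + z) * a := by rw [h1, one_mul]
    _ = -(z * (x * a)) + z * a := by noncomm_ring
    _ = 0 := by rw [← ha]; exact neg_add_cancel _

/-- Iterated powers of the Jacobson radical, as left ideals. -/
private def Jpow (R : Type*) [Ring R] : ℕ → Ideal R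
  | 0 => ⊤
  | n + 1 => Jrad R • Jpow R n

private lemma Jpow_succ_le (n : ℕ) : Jpow R (n + 1) ≤ Jpow R n :=
  Submodule.smul_le.mpr fun r _ m hm => (Jpow R n).smul_mem r hm

private lemma Jpow_antitone : Antitone (Jpow R) :=
  antitone_nat_of_succ_le Jpow_succ_le

private lemma Jpow_le_jac {n : ℕ} {x : R} (hx : x ∈ Jpow R (n + 1)) :
    x ∈ Jrad R := by
  have : Jpow R (n+1) ≤ Jpow R 1 := Jpow_antitone (by omega)
  have h1 : x ∈ Jpow R 1 := this hx
  refine Submodule.smul_induction_on h1 (fun j hj m _ => ?_) (fun a b ha hb => add_mem ha hb)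
  exact jacBot_mul_right hj m

private lemma Jpow_mul_right {n : ℕ} {x : R} (hx : x ∈ Jpow R n) (r : R) :
    x * r ∈ Jpow R n := by
  induction n generalizing x r with
  | zero => trivial
  | succ n ih =>
    refine Submodule.smul_induction_on hx (fun j hj m hm => ?_) (fun a b ha hb => ?_)
    · have : (j • m) * r = j • (m * r) := by simp [smul_eq_mul, mul_assoc]
      rw [this]
      exact Submodule.smul_mem_smul hj (ih hm r)
    · rw [add_mul]; exact add_mem ha hb

private lemma Jpow_add (a b : ℕ) : Jpow R (a + b) = Jpow R a • Jpow R b := by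
  induction a with
  | zero => simp [Jpow, zero_add, Submodule.top_smul]
  | succ a ih =>
    have h : a + 1 + b = (a + b) + 1 := by omega
    rw [h]
    show Jrad R • Jpow R (a + b) = Jpow R (a+1) • Jpow R b
    rw [ih]
    show _ = (Jrad R • Jpow R a) • Jpow R b
    rw [Submodule.smul_assoc]

/-- The Jacobson radical of a left Artinian ring is nilpotent. -/
private lemma exists_Jpow_eq_bot (R : Type*) [Ring R] [IsArtinianRing R] :
    ∃ n, Jpow R n = ⊥ := by
  obtain ⟨n, hn⟩ := IsArtinian.monotone_stabilizes (R := R) (M := R)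
    ⟨fun k => OrderDual.toDual (Jpow R k), fun a b h => Jpow_antitone h⟩
  refine ⟨n + 1, ?_⟩
  by_contra hbot
  set I : Ideal R := Jpow R (n + 1) with hI
  have hstab : ∀ m, n ≤ m → Jpow R n = Jpow R m := fun m hm => hn m hm
  have hII : I • I = I := by
    rw [hI, ← Jpow_add]
    rw [← hstab (n+1) (by omega), ← hstab (n+1+(n+1)) (by omega)]
  have hS : (⊤ : Ideal R) ∈ {A : Ideal R | I • A ≠ ⊥} := by
    intro htop
    apply hbot
    rw [eq_bot_iff]
    intro x hx
    have : x ∈ I • (⊤ : Ideal R) := by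
      simpa using Submodule.smul_mem_smul hx (mem_top (x := (1:R)))
    rw [htop] at this
    exact this
  obtain ⟨A, hA, hmin⟩ := IsArtinian.set_has_minimal {A : Ideal R | I • A ≠ ⊥} ⟨⊤, hS⟩
  have hex : ∃ a ∈ A, I • (Ideal.span {a} : Ideal R) ≠ ⊥ := by
    by_contra hc
    push_neg at hc
    apply hA
    rw [eq_bot_iff]
    refine Submodule.smul_le.mpr fun x hx m hm => ?_
    have : x • m ∈ I • (Ideal.span {m} : Ideal R) :=
      Submodule.smul_mem_smul hx (Ideal.subset_span rfl)
    rw [hc m hm] at this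
    exact this
  obtain ⟨a, haA, hBne⟩ := hex
  set B : Ideal R := I • (Ideal.span {a} : Ideal R) with hBdef
  have hBA : B ≤ A := Submodule.smul_le.mpr fun x hx m hm =>
    A.smul_mem x ((Ideal.span_le.mpr (by simpa using haA)) hm)
  have hBS : B ∈ {A : Ideal R | I • A ≠ ⊥} := by
    show I • B ≠ ⊥
    rw [hBdef, ← Submodule.smul_assoc, hII]
    exact hBne
  have hBAeq : B = A := by
    rcases lt_or_eq_of_le hBA with hlt | heq
    · exact absurd hlt (hmin B hBS)
    · exact heq
  have haB : a ∈ B := hBAeq ▸ haA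
  -- `a = x * a` for some `x ∈ I`
  have hT : ∃ x ∈ I, a = x * a := by
    let T : Submodule R R :=
      { carrier := {m | ∃ x ∈ I, m = x * a}
        add_mem' := by
          rintro p q ⟨x, hx, rfl⟩ ⟨y, hy, rfl⟩
          exact ⟨x + y, add_mem hx hy, (add_mul x y a).symm⟩
        zero_mem' := ⟨0, zero_mem _, (zero_mul a).symm⟩
        smul_mem' := by
          rintro c m ⟨x, hx, rfl⟩
          exact ⟨c * x, I.smul_mem c hx, by rw [smul_eq_mul, mul_assoc]⟩ }
    have hBT : B ≤ T := Submodule.smul_le.mpr fun y hy m hm => by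
      obtain ⟨r, rfl⟩ := Ideal.mem_span_singleton'.mp hm
      exact ⟨y * r, Jpow_mul_right hy r, by rw [smul_eq_mul, mul_assoc]⟩
    obtain ⟨x, hx, hxe⟩ := hBT haB
    exact ⟨x, hx, hxe⟩
  obtain ⟨x, hxI, hxe⟩ := hT
  have ha0 : a = 0 := eq_zero_of_jac (Jpow_le_jac hxI) hxe
  apply hBne
  rw [hBdef, ha0]
  simp [Ideal.span_singleton_eq_bot.mpr rfl]

private lemma mem_ringJacobson_iff {x : R} :
    x ∈ ringJacobson R ↔ x ∈ Jrad R := by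
  have h1 : x ∈ ringJacobson R ↔ x ∈ TwoSidedIdeal.asIdeal (ringJacobson R) := by
    simp [TwoSidedIdeal.mem_asIdeal]
  rw [h1, ringJacobson, TwoSidedIdeal.asIdeal_jacobson]
  have h2 : TwoSidedIdeal.asIdeal (⊥ : TwoSidedIdeal R) = (⊥ : Ideal R) := by
    ext y; simp [TwoSidedIdeal.mem_asIdeal]
  rw [h2]

/-- `modJacobson R` is in bijection with the module quotient of `R` by the left
Jacobson radical. -/
private noncomputable def modJacobsonEquiv :
    modJacobson R ≃ (R ⧸ Jrad R) :=
  Quotient.congr (Equiv.refl R) (fun a b => by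
    change (ringJacobson R).ringCon a b ↔ Submodule.quotientRel _ a b
    rw [TwoSidedIdeal.rel_iff, mem_ringJacobson_iff, Submodule.quotientRel_def])

section SS
variable {M : Type*} [AddCommGroup M] [Module R M]
variable {P : Type*} [AddCommGroup P] [Module R P]

private lemma ss_of_subsingleton [Subsingleton M] : IsSemisimpleModule R M := by
  have : Subsingleton (Submodule R M) := inferInstance
  refine IsSemisimpleModule.mk (toComplementedLattice := ?_)
  exact ⟨fun a => ⟨⊥, by
    constructor
    · simp [Subsingleton.elim a ⊥]
    · rw [codisjoint_iff, Subsingleton.elim (a ⊔ ⊥) ⊤]⟩⟩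

private lemma ss_of_injective (f : M →ₗ[R] P) (hf : Function.Injective f)
    [IsSemisimpleModule R P] : IsSemisimpleModule R M :=
  IsSemisimpleModule.congr (LinearEquiv.ofInjective f hf)

private lemma ss_prod [IsSemisimpleModule R M] [IsSemisimpleModule R P] :
    IsSemisimpleModule R (M × P) := by
  refine isSemisimpleModule_of_isSemisimpleModule_submodule' (ι := Bool)
    (p := fun b => if b then range (inl R M P) else range (inr R M P)) ?_ ?_
  · intro b
    cases b
    · exact IsSemisimpleModule.range (inr R M P)
    · exact IsSemisimpleModule.range (inl R M P)
  · rw [iSup_bool_eq]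
    simp only [if_true, if_false]
    exact sup_range_inl_inr

/-- An Artinian module whose radical (the infimum of all maximal submodules) is
trivial is semisimple. -/
private lemma ss_of_sInf_coatoms_eq_bot [IsArtinian R M]
    (h : sInf {m : Submodule R M | IsCoatom m} = ⊥) : IsSemisimpleModule R M := by
  have hS : (⊤ : Submodule R M) ∈ {N : Submodule R M | IsSemisimpleModule R (M ⧸ N)} := by
    have : Subsingleton (M ⧸ (⊤ : Submodule R M)) :=
      Submodule.Quotient.subsingleton_iff.mpr rfl
    exact ss_of_subsingleton
  obtain ⟨N₀, hN₀, hmin⟩ := IsArtinian.set_has_minimal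
    {N : Submodule R M | IsSemisimpleModule R (M ⧸ N)} ⟨⊤, hS⟩
  have hN₀le : ∀ m : Submodule R M, IsCoatom m → N₀ ≤ m := by
    intro m hm
    have hssm : IsSemisimpleModule R (M ⧸ m) := by
      have : IsSimpleModule R (M ⧸ m) := (isSimpleModule_iff_isCoatom).mpr hm
      infer_instance
    have hssN₀ : IsSemisimpleModule R (M ⧸ N₀) := hN₀
    have hssprod : IsSemisimpleModule R ((M ⧸ N₀) × (M ⧸ m)) := ss_prod
    have hker : ker (LinearMap.prod N₀.mkQ m.mkQ) = N₀ ⊓ m := by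
      rw [ker_prod, ker_mkQ, ker_mkQ]
    have hmem : (N₀ ⊓ m) ∈ {N : Submodule R M | IsSemisimpleModule R (M ⧸ N)} := by
      refine ss_of_injective ((N₀ ⊓ m).liftQ (LinearMap.prod N₀.mkQ m.mkQ) hker.ge) ?_
      rw [← ker_eq_bot]
      exact ker_liftQ_eq_bot _ _ _ hker.le
    have : ¬ (N₀ ⊓ m < N₀) := hmin _ hmem
    have : N₀ ⊓ m = N₀ := by
      rcases lt_or_eq_of_le (inf_le_left : N₀ ⊓ m ≤ N₀) with hlt | heq
      · exact absurd hlt this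
      · exact heq
    rw [← this]; exact inf_le_right
  have hbot : N₀ = ⊥ := by
    rw [eq_bot_iff, ← h]
    exact le_sInf fun m hm => hN₀le m hm
  have : IsSemisimpleModule R (M ⧸ N₀) := hN₀
  rw [hbot] at this
  exact IsSemisimpleModule.congr (Submodule.quotEquivOfEqBot (⊥ : Submodule R M) rfl).symm

end SS

private lemma coatom_map_mkQ {m : Ideal R} (hm : m.IsMaximal) :
    IsCoatom (Submodule.map (Jrad R).mkQ m : Submodule R (R ⧸ Jrad R)) := by
  have hJm : Jrad R ≤ m := sInf_le ⟨bot_le, hm⟩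
  have hcm : comap (Jrad R).mkQ (Submodule.map (Jrad R).mkQ m) = m := by
    rw [Submodule.comap_map_eq, ker_mkQ, sup_eq_left.mpr hJm]
  constructor
  · intro htop
    rw [htop, comap_top] at hcm
    exact hm.ne_top hcm.symm
  · intro X hX
    have h1 : m ≤ comap (Jrad R).mkQ X := hcm ▸ comap_mono hX.le
    rcases lt_or_eq_of_le h1 with hlt | heq
    · have h2 : comap (Jrad R).mkQ X = ⊤ := hm.1.2 _ hlt
      have := Submodule.map_comap_eq_of_surjective (Jrad R).mkQ_surjective X
      rw [h2] at this
      rw [← this, Submodule.map_top, range_mkQ]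
    · have := Submodule.map_comap_eq_of_surjective (Jrad R).mkQ_surjective X
      rw [← heq] at this
      exact absurd this.symm hX.ne'

private lemma sInf_coatoms_quot_eq_bot :
    sInf {m : Submodule R (R ⧸ Jrad R) | IsCoatom m} = ⊥ := by
  rw [eq_bot_iff]
  intro q hq
  obtain ⟨x, rfl⟩ := (Jrad R).mkQ_surjective q
  rw [Submodule.mem_bot]
  have hx : x ∈ Jrad R := by
    rw [Jrad, Ideal.jacobson]
    rw [Submodule.mem_sInf]
    rintro m ⟨-, hm⟩
    have hJm : Jrad R ≤ m := sInf_le ⟨bot_le, hm⟩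
    have h1 : (Jrad R).mkQ x ∈ Submodule.map (Jrad R).mkQ m :=
      (Submodule.mem_sInf.mp hq) _ (coatom_map_mkQ hm)
    have h2 : x ∈ comap (Jrad R).mkQ (Submodule.map (Jrad R).mkQ m) := h1
    rw [Submodule.comap_map_eq, ker_mkQ, sup_eq_left.mpr hJm] at h2
    exact h2
  simpa using (Submodule.Quotient.mk_eq_zero _).mpr hx

/-- An Artinian module killed by the Jacobson radical, over a ring with finite
semisimple quotient by the radical, is finite. -/
private lemma finW {W : Type*} [AddCommGroup W] [Module R W] [IsArtinian R W]
    [Finite (R ⧸ Jrad R)] [IsSemisimpleModule R (R ⧸ Jrad R)]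
    (hJ : ∀ a ∈ Jrad R, ∀ w : W, a • w = 0) : Finite W := by
  have hss : IsSemisimpleModule R W := by
    refine isSemisimpleModule_of_isSemisimpleModule_submodule'
      (p := fun w : W => Submodule.span R {w}) ?_ ?_
    · intro w
      have hle : Jrad R ≤ ker (toSpanSingleton R W w) := by
        intro a ha
        rw [mem_ker, toSpanSingleton_apply]
        exact hJ a ha w
      have hr : Submodule.span R {w} = range ((Jrad R).liftQ (toSpanSingleton R W w) hle) := by
        rw [Submodule.range_liftQ, ← LinearMap.span_singleton_eq_range]
      show IsSemisimpleModule R (Submodule.span R {w})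
      rw [hr]
      exact IsSemisimpleModule.range _
    · rw [eq_top_iff]
      intro x _
      exact le_iSup (fun w : W => Submodule.span R {w}) x (Submodule.mem_span_singleton_self x)
  haveI := hss
  have hfin : Module.Finite R W :=
    ((IsSemisimpleModule.finite_tfae (R := R) (M := W)).out 2 0).mp ‹IsArtinian R W›
  obtain ⟨n, f, hf⟩ := Module.Finite.exists_fin' R W
  have hker : ∀ d : Fin n → R, (∀ i, d i ∈ Jrad R) → f d = 0 := by
    intro d hd
    rw [pi_eq_sum_univ d, map_sum]
    refine Finset.sum_eq_zero fun i _ => ?_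
    rw [map_smul]
    exact hJ (d i) (hd i) _
  refine Finite.of_surjective
    (fun v : Fin n → R ⧸ Jrad R => f (fun i => Quotient.out (v i))) ?_
  intro w
  obtain ⟨r, rfl⟩ := hf w
  refine ⟨fun i => Submodule.Quotient.mk (r i), ?_⟩
  have hd : ∀ i, (Quotient.out (Submodule.Quotient.mk (r i) : R ⧸ Jrad R)) - r i ∈ Jrad R := by
    intro i
    rw [← Submodule.Quotient.eq]
    exact Quotient.out_eq _
  have : f (fun i => Quotient.out (Submodule.Quotient.mk (r i) : R ⧸ Jrad R)) - f r = 0 := by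
    rw [← map_sub]
    exact hker _ (fun i => by simpa using hd i)
  exact sub_eq_zero.mp this

/-- If a submodule and the corresponding quotient are finite, so is the module. -/
private lemma finite_of_finite_sub_quot {M : Type*} [AddCommGroup M] [Module R M]
    (N : Submodule R M) (h1 : Finite N) (h2 : Finite (M ⧸ N)) : Finite M := by
  haveI : Finite (M ⧸ N.toAddSubgroup) := h2
  haveI : Finite N.toAddSubgroup := h1
  exact Finite.of_equiv _
    (AddSubgroup.addGroupEquivQuotientProdAddSubgroup (s := N.toAddSubgroup)).symm

end Aux

/-- A left Artinian ring whose quotient by the Jacobson radical is finite is itself finite. -/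
theorem finite_of_isArtinianRing_of_finite_modJacobson (R : Type*) [Ring R]
    [IsArtinianRing R] (h : Finite (modJacobson R)) : Finite R := by
  haveI : IsArtinian R R := ‹IsArtinianRing R›
  haveI hQfin : Finite (R ⧸ Jrad R) := Finite.of_equiv _ modJacobsonEquiv
  haveI : IsArtinian R (R ⧸ Jrad R) := isArtinian_of_finite
  haveI hQss : IsSemisimpleModule R (R ⧸ Jrad R) :=
    ss_of_sInf_coatoms_eq_bot sInf_coatoms_quot_eq_bot
  obtain ⟨n, hn⟩ := exists_Jpow_eq_bot R
  have step : ∀ j : ℕ, Finite (Jpow R (j+1)) → Finite (Jpow R j) := by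
    intro j hfin
    set M := ↥(Jpow R j) with hM
    set N : Submodule R M := Submodule.comap (Jpow R j).subtype (Jpow R (j+1)) with hN
    haveI : Finite N := Finite.of_equiv _
      (Submodule.comapSubtypeEquivOfLe (Jpow_succ_le j)).symm.toEquiv
    haveI : IsArtinian R M := inferInstance
    haveI : Finite (M ⧸ N) := by
      refine finW (R := R) ?_
      intro a ha q
      obtain ⟨m, rfl⟩ := N.mkQ_surjective q
      show a • Submodule.Quotient.mk m = 0
      rw [← Submodule.Quotient.mk_smul, Submodule.Quotient.mk_eq_zero]
      show ((a • m : M) : R) ∈ Jpow R (j+1)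
      have : ((a • m : M) : R) = a • (m : R) := rfl
      rw [this]
      exact Submodule.smul_mem_smul ha m.2
    exact finite_of_finite_sub_quot N ‹_› ‹_›
  have all : ∀ i, Finite (Jpow R (n - i)) := by
    intro i
    induction i with
    | zero =>
      have h0 : n - 0 = n := by omega
      rw [h0, hn]
      infer_instance
    | succ i ih =>
      rcases le_or_gt n (i + 1) with hle | hlt
      · rcases le_or_gt n i with hle' | hlt'
        · have : n - (i+1) = n - i := by omega
          rw [this]; exact ih
        · have : n - (i+1) = 0 ∧ n - i = 1 := by omega
          rw [this.1]
          refine step 0 ?_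
          have h01 : (0:ℕ) + 1 = n - i := by omega
          rw [h01]; exact ih
      · have h2 : n - (i+1) + 1 = n - i := by omega
        refine step _ ?_
        rw [h2]; exact ih
  have hfin0 : Finite (Jpow R 0) := by
    have := all n
    rwa [Nat.sub_self] at this
  have htop : Finite (⊤ : Submodule R R) := hfin0
  exact Finite.of_equiv _ (Submodule.topEquiv (R := R) (M := R)).toEquiv
end

section
/- Let R be a left Artinian ring such that 2 is a unit of R and the clique number of the unit graph G(R) is finite. Then R is a finite ring. -/
section CliqueStuff
variable {R : Type*} [Ring R]

/-- All "pairwise sum is a unit" sets have size at most `B`. -/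
def CliqueBdd (T : Type*) [Ring T] (B : ℕ∞) : Prop :=
  ∀ s : Set T, (s.Pairwise fun a b => IsUnit (a + b)) → s.encard ≤ B

lemma half_spec (h2 : IsUnit (2 : R)) :
    ∃ h : R, 2 * h = 1 ∧ h * 2 = 1 ∧ ∀ r, h * r = r * h := by
  obtain ⟨u, hu⟩ := h2
  have h1 : (↑u⁻¹ : R) * 2 = 1 := by rw [← hu]; exact u.inv_mul
  have h2' : (2 : R) * ↑u⁻¹ = 1 := by rw [← hu]; exact u.mul_inv
  refine ⟨↑u⁻¹, h2', h1, fun r => ?_⟩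
  calc (↑u⁻¹ : R) * r = ↑u⁻¹ * r * (2 * ↑u⁻¹) := by rw [h2', mul_one]
    _ = ↑u⁻¹ * (r * 2) * ↑u⁻¹ := by rw [mul_assoc, mul_assoc, mul_assoc]
    _ = ↑u⁻¹ * (2 * r) * ↑u⁻¹ := by rw [mul_two, two_mul]
    _ = (↑u⁻¹ * 2) * (r * ↑u⁻¹) := by rw [mul_assoc, mul_assoc, mul_assoc]
    _ = r * ↑u⁻¹ := by rw [h1, one_mul]

lemma finite_of_nilpotent_sums (h2 : IsUnit (2 : R)) {B : ℕ∞} (hB : B ≠ ⊤)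
    (hcl : CliqueBdd R B) (V : Set R) (hV : ∀ x ∈ V, ∀ y ∈ V, IsNilpotent (x + y)) :
    V.Finite := by
  obtain ⟨h, h2h, hh2, hcomm⟩ := half_spec h2
  have hinj : Function.Injective (fun x : R => 1 + x) := fun a b hab => by
    simpa using hab
  have hpair : ((fun x : R => 1 + x) '' V).Pairwise fun a b => IsUnit (a + b) := by
    rintro _ ⟨x, hx, rfl⟩ _ ⟨y, hy, rfl⟩ _
    have hnil : IsNilpotent (h * (x + y)) := by
      obtain ⟨k, hk⟩ := hV x hx y hy
      have hc : Commute h (x + y) := hcomm (x + y)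
      exact ⟨k, by rw [hc.mul_pow, hk, mul_zero]⟩
    have : (1 + x) + (1 + y) = 2 * (1 + h * (x + y)) := by
      rw [mul_add, mul_one, ← mul_assoc, h2h, one_mul, add_add_add_comm, one_add_one_eq_two]
    rw [this]
    exact h2.mul hnil.isUnit_one_add
  have : ((fun x : R => 1 + x) '' V).Finite := by
    rw [← Set.encard_lt_top_iff]
    exact lt_of_le_of_lt (hcl _ hpair) (lt_top_iff_ne_top.mpr hB)
  exact Set.Finite.of_finite_image this hinj.injOn

end CliqueStuff

section Corner
variable {R : Type*} [Ring R]

/-- The corner set `eRe` of an idempotent. -/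
def Corner (e : R) (_ : IsIdempotentElem e) : Type _ := {x : R // e * x * e = x}

namespace Corner
variable {e : R} {he : IsIdempotentElem e}

lemma left_absorb (he : IsIdempotentElem e) {x : R} (hx : e * x * e = x) : e * x = x := by
  conv_lhs => rw [← hx]
  simp only [← mul_assoc]
  rw [he, hx]

lemma right_absorb (he : IsIdempotentElem e) {x : R} (hx : e * x * e = x) : x * e = x := by
  conv_lhs => rw [← hx]
  rw [mul_assoc, he, hx]

lemma proj_mem (he : IsIdempotentElem e) (z : R) : e * (e * z * e) * e = e * z * e := by
  simp only [← mul_assoc]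
  rw [he, mul_assoc, he]

instance : Zero (Corner e he) := ⟨⟨0, by rw [mul_zero, zero_mul]⟩⟩
instance : Add (Corner e he) :=
  ⟨fun x y => ⟨x.1 + y.1, by rw [mul_add, add_mul, x.2, y.2]⟩⟩
instance : Neg (Corner e he) := ⟨fun x => ⟨-x.1, by rw [mul_neg, neg_mul, x.2]⟩⟩
instance : Mul (Corner e he) :=
  ⟨fun x y => ⟨x.1 * y.1, by
    rw [← mul_assoc, mul_assoc e x.1 y.1, ← mul_assoc e x.1 y.1]
    rw [left_absorb he x.2, mul_assoc, right_absorb he y.2]⟩⟩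
instance : One (Corner e he) := ⟨⟨e, by rw [he, he]⟩⟩

instance : Ring (Corner e he) where
  add := (· + ·)
  zero := 0
  neg := Neg.neg
  mul := (· * ·)
  one := 1
  nsmul := nsmulRec
  zsmul := zsmulRec
  add_assoc x y z := Subtype.ext (add_assoc _ _ _)
  zero_add x := Subtype.ext (zero_add _)
  add_zero x := Subtype.ext (add_zero _)
  add_comm x y := Subtype.ext (add_comm _ _)
  neg_add_cancel x := Subtype.ext (neg_add_cancel _)
  mul_assoc x y z := Subtype.ext (mul_assoc _ _ _)
  one_mul x := Subtype.ext (left_absorb he x.2)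
  mul_one x := Subtype.ext (right_absorb he x.2)
  left_distrib x y z := Subtype.ext (left_distrib _ _ _)
  right_distrib x y z := Subtype.ext (right_distrib _ _ _)
  zero_mul x := Subtype.ext (zero_mul _)
  mul_zero x := Subtype.ext (mul_zero _)

@[simp] lemma val_add (x y : Corner e he) : (x + y).1 = x.1 + y.1 := rfl
@[simp] lemma val_mul (x y : Corner e he) : (x * y).1 = x.1 * y.1 := rfl
@[simp] lemma val_zero : (0 : Corner e he).1 = 0 := rfl
@[simp] lemma val_one : (1 : Corner e he).1 = e := rfl
@[simp] lemma val_neg (x : Corner e he) : (-x).1 = -x.1 := rfl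

lemma val_injective : Function.Injective (Subtype.val : Corner e he → R) :=
  Subtype.val_injective

end Corner
end Corner

namespace Corner
variable {R : Type*} [Ring R] {e : R} {he : IsIdempotentElem e}

/-- Compression of an arbitrary ring element to the corner. -/
def cmk (he : IsIdempotentElem e) (z : R) : Corner e he := ⟨e * z * e, proj_mem he z⟩

@[simp] lemma cmk_val (z : R) : (cmk he z).1 = e * z * e := rfl

lemma cmk_self (x : Corner e he) : cmk he x.1 = x := Subtype.ext (by simp [x.2])

/-- The induced ideal of `R` attached to an ideal of the corner ring. -/
def idealUp (he : IsIdempotentElem e) (I : Ideal (Corner e he)) : Ideal R where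
  carrier := {z : R | ∀ r : R, cmk he (r * z) ∈ I}
  add_mem' := by
    intro z w hz hw r
    have : cmk he (r * (z + w)) = cmk he (r * z) + cmk he (r * w) :=
      Subtype.ext (by simp [mul_add, add_mul])
    rw [this]
    exact I.add_mem (hz r) (hw r)
  zero_mem' := by
    intro r
    have : cmk he (r * (0:R)) = 0 := Subtype.ext (by simp)
    rw [this]
    exact I.zero_mem
  smul_mem' := by
    intro c z hz r
    have : cmk he (r * (c • z)) = cmk he ((r * c) * z) :=
      Subtype.ext (by simp [mul_assoc])
    rw [this]
    exact hz (r * c)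

lemma mem_idealUp_iff (I : Ideal (Corner e he)) (z : R) :
    z ∈ idealUp he I ↔ ∀ r : R, cmk he (r * z) ∈ I := Iff.rfl

lemma mem_iff_val_mem_idealUp (I : Ideal (Corner e he)) (x : Corner e he) :
    x ∈ I ↔ x.1 ∈ idealUp he I := by
  constructor
  · intro hx r
    have : cmk he (r * x.1) = cmk he r * x := by
      refine Subtype.ext ?_
      show e * (r * x.1) * e = (e * r * e) * x.1
      rw [mul_assoc (e*r) e x.1, left_absorb he x.2, ← mul_assoc e r x.1,
        mul_assoc (e*r) x.1 e, right_absorb he x.2]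
    rw [this]
    exact I.mul_mem_left _ hx
  · intro hx
    have h1 := hx e
    have : cmk he (e * x.1) = x :=
      Subtype.ext (by show e * (e * x.1) * e = x.1; rw [left_absorb he x.2, x.2])
    rwa [this] at h1

lemma cornerArtinian [IsArtinianRing R] (he : IsIdempotentElem e) :
    IsArtinianRing (Corner e he) := by
  have hle : ∀ I J : Ideal (Corner e he), I ≤ J ↔ idealUp he I ≤ idealUp he J := by
    intro I J
    constructor
    · intro hIJ z hz r
      exact hIJ (hz r)
    · intro hIJ x hx
      exact (mem_iff_val_mem_idealUp J x).2 (hIJ ((mem_iff_val_mem_idealUp I x).1 hx))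
  have hstrict : StrictMono (idealUp he) := by
    intro I J hIJ
    rw [lt_iff_le_not_ge]
    exact ⟨(hle I J).1 hIJ.le, fun hle' => (lt_iff_le_not_ge.mp hIJ).2 ((hle J I).2 hle')⟩
  exact hstrict.wellFoundedLT

lemma two_val : ((2 : Corner e he)).1 = 2 * e := by
  rw [← one_add_one_eq_two, ← one_add_one_eq_two, val_add, val_one, add_mul, one_mul]

lemma cornerTwoIsUnit (h2 : IsUnit (2 : R)) (he : IsIdempotentElem e) :
    IsUnit (2 : Corner e he) := by
  obtain ⟨h, h2h, hh2, hcomm⟩ := half_spec h2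
  rw [isUnit_iff_exists]
  have hhe : e * h * e = h * e := by rw [← hcomm e, mul_assoc, he]
  refine ⟨cmk he h, Subtype.ext ?_, Subtype.ext ?_⟩
  · show (2 : Corner e he).1 * (e * h * e) = (1 : Corner e he).1
    rw [two_val, val_one, hhe, mul_assoc 2 e (h*e), ← mul_assoc e h e, ← hcomm e,
      mul_assoc h e e, he, ← mul_assoc 2 h e, h2h, one_mul]
  · show (e * h * e) * (2 : Corner e he).1 = (1 : Corner e he).1
    have he2 : e * (2 * e) = 2 * e := by
      rw [← mul_assoc e 2 e, mul_two e, ← two_mul e, mul_assoc 2 e e, he]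
    rw [two_val, val_one, hhe, mul_assoc h e (2*e), he2, ← mul_assoc h 2 e, hh2, one_mul]

lemma cliqueBdd_corner {B : ℕ∞} (h2 : IsUnit (2 : R)) (hcl : CliqueBdd R B)
    (he : IsIdempotentElem e) : CliqueBdd (Corner e he) B := by
  intro s hs
  obtain ⟨h, h2h, hh2, hcomm⟩ := half_spec h2
  have hf'idem : (1 - e) * (1 - e) = 1 - e := by
    rw [sub_mul, one_mul, mul_sub, mul_one, he]
    abel
  have hcornerL : ∀ a : Corner e he, a.1 * (1 - e) = 0 := fun a => by
    rw [mul_sub, mul_one, right_absorb he a.2, sub_self]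
  have hcornerR : ∀ a : Corner e he, (1 - e) * a.1 = 0 := fun a => by
    rw [sub_mul, one_mul, left_absorb he a.2, sub_self]
  set f : Corner e he → R := fun x => x.1 + (1 - e) with hf
  have hinj : Function.Injective f := fun a b hab => Subtype.ext (by simpa [f] using hab)
  have hpair : (f '' s).Pairwise fun a b => IsUnit (a + b) := by
    rintro _ ⟨x, hx, rfl⟩ _ ⟨y, hy, rfl⟩ hne
    have hxyne : x ≠ y := fun hh => hne (by rw [hh])
    have hu : IsUnit (x + y) := hs hx hy hxyne
    rw [isUnit_iff_exists] at hu ⊢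
    obtain ⟨v, hv1, hv2⟩ := hu
    set w : Corner e he := x + y with hwdef
    have hwv : w.1 * v.1 = e := by
      have := congrArg Subtype.val hv1
      simpa using this
    have hvw : v.1 * w.1 = e := by
      have := congrArg Subtype.val hv2
      simpa using this
    have harr : f x + f y = w.1 + 2 * (1 - e) := by
      show (x.1 + (1 - e)) + (y.1 + (1 - e)) = (x.1 + y.1) + 2 * (1 - e)
      rw [two_mul]
      abel
    have t1 : w.1 * (h * (1 - e)) = 0 := by
      rw [hcomm (1 - e), ← mul_assoc, hcornerL w, zero_mul]
    have t2 : (2 * (1 - e)) * v.1 = 0 := by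
      rw [mul_assoc, hcornerR v, mul_zero]
    have t3 : (2 * (1 - e)) * (h * (1 - e)) = 1 - e := by
      rw [hcomm (1 - e), mul_assoc 2 (1-e) ((1-e)*h), ← mul_assoc (1-e) (1-e) h,
        hf'idem, ← hcomm (1 - e), ← mul_assoc 2 h (1-e), h2h, one_mul]
    have u1 : v.1 * (2 * (1 - e)) = 0 := by
      rw [two_mul, mul_add, hcornerL v, add_zero]
    have u2 : (h * (1 - e)) * w.1 = 0 := by
      rw [mul_assoc, hcornerR w, mul_zero]
    have u3 : (h * (1 - e)) * (2 * (1 - e)) = 1 - e := by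
      rw [two_mul, mul_add, mul_assoc h (1-e) (1-e), hf'idem, ← two_mul,
        ← mul_assoc 2 h (1-e), h2h, one_mul]
    refine ⟨v.1 + h * (1 - e), ?_, ?_⟩
    · rw [harr, add_mul, mul_add, mul_add, hwv, t1, t2, t3]
      abel
    · rw [harr, mul_add, add_mul, add_mul, hvw, u1, u2, u3]
      abel
  calc s.encard = (f '' s).encard := (hinj.injOn.encard_image).symm
    _ ≤ B := hcl _ hpair

end Corner

section Base
variable {T : Type*} [Ring T]

lemma one_eq_zero_of_leftinv_nilpotent {w y : T} (hwy : w * y = 1) (hy : IsNilpotent y) :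
    (1 : T) = 0 := by
  obtain ⟨k, hk⟩ := hy
  have hpow : ∀ n : ℕ, w ^ n * y ^ n = 1 := by
    intro n
    induction n with
    | zero => simp
    | succ n ihn =>
      rw [pow_succ w, pow_succ' y, mul_assoc (w^n) w (y * y^n), ← mul_assoc w y (y^n),
        hwy, one_mul, ihn]
  rw [← hpow k, hk, mul_zero]

lemma one_eq_zero_of_rightinv_nilpotent {w y : T} (hwy : y * w = 1) (hy : IsNilpotent y) :
    (1 : T) = 0 := by
  obtain ⟨k, hk⟩ := hy
  have hpow : ∀ n : ℕ, y ^ n * w ^ n = 1 := by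
    intro n
    induction n with
    | zero => simp
    | succ n ihn =>
      rw [pow_succ' y, pow_succ w, mul_assoc y (y^n) (w^n * w), ← mul_assoc (y^n) (w^n) w,
        ihn, one_mul, hwy]
  rw [← hpow k, hk, zero_mul]

lemma unit_or_nilpotent [IsArtinianRing T]
    (hid : ∀ x : T, IsIdempotentElem x → x = 0 ∨ x = 1) (x : T) :
    IsUnit x ∨ IsNilpotent x := by
  by_contra hcon
  push_neg at hcon
  obtain ⟨hxu, hxn⟩ := hcon
  have hmem : ∀ a c : T, (∃ t, t * c = a) → a ∈ Ideal.span {c} := fun a c ⟨t, ht⟩ =>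
    Submodule.mem_span_singleton.mpr ⟨t, by rw [smul_eq_mul, ht]⟩
  have hmem' : ∀ a c : T, a ∈ Ideal.span {c} → ∃ t, t * c = a := fun a c ha => by
    obtain ⟨t, ht⟩ := Submodule.mem_span_singleton.mp ha
    exact ⟨t, by rw [← smul_eq_mul, ht]⟩
  set S : Set (Ideal T) := {I | ∃ z : T, ¬IsUnit z ∧ ¬IsNilpotent z ∧ I = Ideal.span {z}}
    with hSdef
  have hwf : WellFounded ((· < ·) : Ideal T → Ideal T → Prop) := IsWellFounded.wf
  obtain ⟨I0, hI0, hmin⟩ := hwf.has_min S ⟨_, x, hxu, hxn, rfl⟩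
  obtain ⟨b, hbu, hbn, rfl⟩ := hI0
  have hbne : b ≠ 0 := fun h => hbn (h ▸ ⟨1, by simp⟩)
  -- span {b * b} = span {b}
  have hb2S : Ideal.span {b * b} ∈ S := by
    refine ⟨b * b, fun hu => hbu ?_, fun hn => hbn ?_, rfl⟩
    · rw [← pow_two] at hu
      exact (isUnit_pow_iff two_ne_zero).mp hu
    · obtain ⟨k, hk⟩ := hn
      exact ⟨2 * k, by rw [pow_mul, pow_two, hk]⟩
  have hb2le : Ideal.span {b * b} ≤ Ideal.span {b} :=
    Ideal.span_le.mpr (Set.singleton_subset_iff.mpr (hmem _ _ ⟨b, rfl⟩))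
  have hb2 : Ideal.span {b * b} = Ideal.span {b} :=
    hb2le.lt_or_eq.resolve_left (hmin _ hb2S)
  obtain ⟨t, ht⟩ : ∃ t, t * (b * b) = b :=
    hmem' _ _ (hb2 ▸ Submodule.mem_span_singleton_self b)
  set y : T := t * b with hydef
  have hyb : y * b = b := by rw [hydef, mul_assoc, ht]
  have hypow : ∀ n : ℕ, y ^ n * b = b := by
    intro n
    induction n with
    | zero => simp
    | succ n ihn => rw [pow_succ, mul_assoc, hyb, ihn]
  have hyn : ¬IsNilpotent y := by
    rintro ⟨k, hk⟩
    exact hbne (by rw [← hypow k, hk, zero_mul])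
  have hyu : ¬IsUnit y := by
    intro hu
    obtain ⟨v, hv1, hv2⟩ := isUnit_iff_exists.mp hu
    have hlb : (v * t) * b = 1 := by rw [mul_assoc, ← hydef, hv2]
    have hidem : IsIdempotentElem (b * (v * t)) := by
      show (b * (v * t)) * (b * (v * t)) = b * (v * t)
      rw [mul_assoc b (v*t) (b*(v*t)), ← mul_assoc (v*t) b (v*t), hlb, one_mul]
    rcases hid _ hidem with h0 | h1
    · refine hbne ?_
      calc b = (b * (v * t)) * b := by rw [mul_assoc, hlb, mul_one]
        _ = 0 := by rw [h0, zero_mul]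
    · exact hbu (isUnit_iff_exists.mpr ⟨v * t, h1, hlb⟩)
  set d : T := y - y * y with hddef
  have hdb : d * b = 0 := by
    rw [hddef, sub_mul, mul_assoc y y b, hyb, hyb, sub_self]
  have hdmem : ∃ t', t' * b = d := by
    refine ⟨t - t * b * t, ?_⟩
    rw [sub_mul, ← hydef, mul_assoc (t*b) t b, ← hydef]
  have hd : IsNilpotent d := by
    by_contra hdn
    have hdu : ¬IsUnit d := by
      intro hu
      obtain ⟨v, hv1, hv2⟩ := isUnit_iff_exists.mp hu
      refine hbne ?_
      calc b = 1 * b := (one_mul b).symm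
        _ = v * (d * b) := by rw [← hv2, mul_assoc]
        _ = 0 := by rw [hdb, mul_zero]
    have hdS : Ideal.span {d} ∈ S := ⟨d, hdu, hdn, rfl⟩
    have hdle : Ideal.span {d} ≤ Ideal.span {b} :=
      Ideal.span_le.mpr (Set.singleton_subset_iff.mpr (hmem _ _ hdmem))
    have heq : Ideal.span {d} = Ideal.span {b} := hdle.lt_or_eq.resolve_left (hmin _ hdS)
    obtain ⟨v, hv⟩ : ∃ v, v * d = b := hmem' _ _ (heq ▸ Submodule.mem_span_singleton_self b)
    refine hbn ⟨2, ?_⟩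
    calc b ^ 2 = b * b := pow_two b
      _ = (v * d) * b := by rw [hv]
      _ = v * (d * b) := mul_assoc _ _ _
      _ = 0 := by rw [hdb, mul_zero]
  obtain ⟨k0, hk0⟩ := hd
  set m : ℕ := k0 + 1 with hmdef
  have hdm : (y - y ^ 2) ^ m = 0 := by
    have h1 : (y - y^2) = d := by rw [hddef, pow_two]
    rw [h1, pow_succ, hk0, zero_mul]
  have hidem := isIdempotentElem_one_sub_one_sub_pow_pow y m hdm
  rcases hid _ hidem with h0 | h1
  · -- (1 - y^m)^m = 1, derive y nilpotent
    have h0' : (1 : T) = (1 - y ^ m) ^ m := (sub_eq_zero.mp h0)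
    set s : T := ∑ i ∈ Finset.range m, y ^ i with hsdef
    have hcys : Commute y s :=
      Commute.sum_right _ _ _ (fun i _ => (Commute.refl y).pow_right i)
    have hs1y : s * (1 - y) = 1 - y ^ m := by
      have hg := geom_sum_mul y m
      calc s * (1 - y) = -(s * (y - 1)) := by rw [mul_sub, mul_sub, mul_one]; abel
        _ = -(y ^ m - 1) := by rw [hsdef, hg]
        _ = 1 - y ^ m := neg_sub _ _
    have hcs1y : Commute s (1 - y) := (Commute.one_right s).sub_right hcys.symm
    have key1 : s ^ m * (1 - y) ^ m = 1 := by
      rw [← hcs1y.mul_pow, hs1y, ← h0']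
    have hy1y : Commute y (1 - y) := (Commute.one_right y).sub_right (Commute.refl y)
    have hyy : (y * (1 - y)) ^ m = 0 := by
      rw [mul_sub, mul_one, ← pow_two, hdm]
    refine hyn ⟨m, ?_⟩
    calc y ^ m = y ^ m * (s ^ m * (1 - y) ^ m) := by rw [key1, mul_one]
      _ = s ^ m * (y ^ m * (1 - y) ^ m) := by
          rw [← mul_assoc, (hcys.pow_pow m m).eq, mul_assoc]
      _ = s ^ m * (y * (1 - y)) ^ m := by rw [hy1y.mul_pow]
      _ = 0 := by rw [hyy, mul_zero]
  · -- (1 - y^m)^m = 0, derive y unit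
    have h1' : (1 - y ^ m) ^ m = 0 := sub_eq_self.mp h1
    have hnil : IsNilpotent (1 - y ^ m) := ⟨m, h1'⟩
    have := hnil.isUnit_one_sub
    rw [sub_sub_cancel] at this
    exact hyu ((isUnit_pow_iff (Nat.succ_ne_zero k0)).mp this)

end Base

theorem base_finite (T : Type*) [Ring T] [IsArtinianRing T] (h2 : IsUnit (2 : T))
    {B : ℕ∞} (hB : B ≠ ⊤) (hcl : CliqueBdd T B)
    (hid : ∀ x : T, IsIdempotentElem x → x = 0 ∨ x = 1) : Finite T := by
  rcases subsingleton_or_nontrivial T with hsub | hnt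
  · exact Finite.of_subsingleton
  have key := unit_or_nilpotent hid
  set N : Set T := {x | ¬IsUnit x} with hNdef
  have hN0 : (0 : T) ∈ N := not_isUnit_zero
  have hNnil : ∀ x ∈ N, IsNilpotent x := fun x hx => (key x).resolve_left hx
  have hNmulL : ∀ {r x : T}, x ∈ N → r * x ∈ N := by
    intro r x hx hu
    obtain ⟨v, hv1, hv2⟩ := isUnit_iff_exists.mp hu
    have hone : (v * r) * x = 1 := by rw [mul_assoc, hv2]
    exact one_ne_zero (one_eq_zero_of_leftinv_nilpotent hone (hNnil x hx))
  have hNmulR : ∀ {r x : T}, x ∈ N → x * r ∈ N := by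
    intro r x hx hu
    obtain ⟨v, hv1, hv2⟩ := isUnit_iff_exists.mp hu
    have hone : x * (r * v) = 1 := by rw [← mul_assoc, hv1]
    exact one_ne_zero (one_eq_zero_of_rightinv_nilpotent hone (hNnil x hx))
  have hNadd : ∀ {x y : T}, x ∈ N → y ∈ N → x + y ∈ N := by
    intro x y hx hy hu
    obtain ⟨v, hv1, hv2⟩ := isUnit_iff_exists.mp hu
    have hsum : v * x + v * y = 1 := by rw [← mul_add, hv2]
    have hvx : v * x ∈ N := hNmulL hx
    have h1 : IsUnit (v * y) := by
      have hvy : v * y = 1 - v * x := by rw [← hsum]; abel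
      rw [hvy]
      exact (hNnil _ hvx).isUnit_one_sub
    have h2y : (x + y) * (v * y) = y := by rw [← mul_assoc, hv1, one_mul]
    exact hy (h2y ▸ hu.mul h1)
  have hNfin : N.Finite := finite_of_nilpotent_sums h2 hB hcl N
    (fun x hx y hy => hNnil _ (hNadd hx hy))
  set NI : TwoSidedIdeal T := TwoSidedIdeal.mk' N hN0 hNadd
      (fun {x} hx hu => hx (by simpa using hu.neg)) (fun {x y} hy => hNmulL hy)
      (fun {x y} hx => hNmulR hx) with hNIdef
  set Q := NI.ringCon.Quotient with hQdef
  set π : T →+* Q := RingCon.mk' NI.ringCon with hπdef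
  have hπsurj : Function.Surjective π := fun q => Quot.inductionOn q (fun a => ⟨a, rfl⟩)
  have hker : ∀ z : T, π z = 0 ↔ z ∈ N := by
    intro z
    have h1 : π z = π 0 ↔ NI.ringCon z 0 := RingCon.eq _
    rw [map_zero] at h1
    rw [h1, ← TwoSidedIdeal.mem_iff, hNIdef, TwoSidedIdeal.mem_mk']
  haveI hQnt : Nontrivial Q := by
    refine ⟨π 1, 0, fun hcon => ?_⟩
    exact ((hker 1).mp hcon) isUnit_one
  have hQunit : ∀ q : Q, q ≠ 0 → IsUnit q := by
    intro q hq
    obtain ⟨z, rfl⟩ := hπsurj q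
    have hz : z ∉ N := fun hz => hq ((hker z).mpr hz)
    exact (not_not.mp hz).map π
  set g : Q → T := Function.surjInv hπsurj with hgdef
  have hg : ∀ q : Q, π (g q) = q := fun q => Function.surjInv_eq hπsurj q
  have ginj : Function.Injective g := Function.injective_surjInv hπsurj
  have hQfin : Finite Q := by
    by_contra hinf
    rw [not_finite_iff_infinite] at hinf
    classical
    have hcliques : ∀ k : ℕ, ∃ s : Finset Q, s.card = k ∧
        (↑s : Set Q).Pairwise fun a b => IsUnit (a + b) := by
      intro k
      induction k with
      | zero => exact ⟨∅, rfl, by simp⟩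
      | succ k ihk =>
        obtain ⟨s, hcard, hpair⟩ := ihk
        obtain ⟨q, hq⟩ := Infinite.exists_notMem_finset
          (insert (0 : Q) (s ∪ s.image (fun a => -a)))
        have hq1 : q ∉ s := fun h =>
          hq (Finset.mem_insert_of_mem (Finset.mem_union_left _ h))
        have hq2 : ∀ b ∈ s, q ≠ -b := fun b hb h =>
          hq (Finset.mem_insert_of_mem (Finset.mem_union_right _
            (Finset.mem_image.mpr ⟨b, hb, h.symm⟩)))
        refine ⟨insert q s, ?_, ?_⟩
        · rw [Finset.card_insert_of_notMem hq1, hcard]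
        · rw [Finset.coe_insert]
          refine (haveI : Std.Symm (fun a b : Q => IsUnit (a + b)) := ⟨?_⟩
            Set.pairwise_insert_of_symm.mpr ⟨hpair, fun b hb hne => ?_⟩)
          · intro a b hab
            rwa [add_comm]
          · refine hQunit _ (fun h0 => ?_)
            exact hq2 b hb (eq_neg_of_add_eq_zero_left h0)
    lift B to ℕ using hB with m hm
    obtain ⟨s, hcard, hpair⟩ := hcliques (m + 1)
    have hpairT : ((↑(s.image g) : Set T)).Pairwise fun a b => IsUnit (a + b) := by
      rw [Finset.coe_image]
      rintro _ ⟨aq, haq, rfl⟩ _ ⟨bq, hbq, rfl⟩ hne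
      have haa : aq ≠ bq := fun h => hne (by rw [h])
      have hu : IsUnit (aq + bq) := hpair haq hbq haa
      have hne0 : aq + bq ≠ 0 := fun h0 => by
        rw [h0] at hu
        exact not_isUnit_zero hu
      have hππ : π (g aq + g bq) = aq + bq := by rw [map_add, hg, hg]
      have hnm : g aq + g bq ∉ N := fun hmem => hne0 (by rw [← hππ]; exact (hker _).mpr hmem)
      exact not_not.mp hnm
    have hbound := hcl _ hpairT
    rw [Set.encard_coe_eq_coe_finsetCard, Finset.card_image_of_injective s ginj, hcard] at hbound
    have : m + 1 ≤ m := by exact_mod_cast hbound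
    exact Nat.not_succ_le_self m this
  haveI hNsub : Finite ↥N := hNfin.to_subtype
  have hFinj : Function.Injective (fun z : T => ((π z, ⟨z - g (π z), (hker _).mp
      (by rw [map_sub, hg, sub_self])⟩) : Q × ↥N)) := by
    intro a b hab
    have h1 : π a = π b := congrArg Prod.fst hab
    have h2 : a - g (π a) = b - g (π b) := congrArg (fun p : Q × ↥N => (p.2 : T)) hab
    calc a = (a - g (π a)) + g (π a) := by rw [sub_add_cancel]
      _ = (b - g (π b)) + g (π b) := by rw [h2, h1]
      _ = b := by rw [sub_add_cancel]
  exact Finite.of_injective _ hFinj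

lemma proj_mem2 {R : Type*} [Ring R] {e₁ e₂ : R} (he₁ : IsIdempotentElem e₁)
    (he₂ : IsIdempotentElem e₂) (z : R) : e₁ * (e₁ * z * e₂) * e₂ = e₁ * z * e₂ := by
  simp only [← mul_assoc]
  rw [he₁, mul_assoc, he₂]

theorem corner_finite (R : Type*) [Ring R] [IsArtinianRing R] (h2 : IsUnit (2 : R))
    {B : ℕ∞} (hB : B ≠ ⊤) (hcl : CliqueBdd R B) :
    ∀ I : Ideal R, ∀ e : R, ∀ he : IsIdempotentElem e, Ideal.span {e} = I →
      Finite (Corner e he) := by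
  intro I
  induction I using IsArtinian.induction with
  | _ I ih =>
    intro e he hspan
    by_cases hex : ∃ x : Corner e he, IsIdempotentElem x ∧ x ≠ 0 ∧ x ≠ 1
    · obtain ⟨x, hxi, hx0, hx1⟩ := hex
      set e₁ : R := x.1 with he₁def
      have he₁ : IsIdempotentElem e₁ := by
        have := congrArg Subtype.val hxi
        exact (by simpa using this : x.1 * x.1 = x.1)
      have he₁e : e₁ * e = e₁ := Corner.right_absorb he x.2
      have hee₁ : e * e₁ = e₁ := Corner.left_absorb he x.2
      have he₁0 : e₁ ≠ 0 := fun h => hx0 (Subtype.ext h)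
      have he₁e' : e₁ ≠ e := fun h => hx1 (Subtype.ext h)
      set e₂ : R := e - e₁ with he₂def
      have hesum : e₁ + e₂ = e := by rw [he₂def, add_sub_cancel]
      have he₂ : IsIdempotentElem e₂ := by
        show (e - e₁) * (e - e₁) = e - e₁
        rw [sub_mul, mul_sub, mul_sub, he, hee₁, he₁e, he₁]
        abel
      have he₂0 : e₂ ≠ 0 := fun h => he₁e' (sub_eq_zero.mp h).symm
      have h12 : e₁ * e₂ = 0 := by rw [he₂def, mul_sub, he₁e, he₁, sub_self]
      have h21 : e₂ * e₁ = 0 := by rw [he₂def, sub_mul, hee₁, he₁, sub_self]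
      have he₂e : e₂ * e = e₂ := by rw [he₂def, sub_mul, he, he₁e]
      have hmemspan : ∀ a c : R, (∃ t, t * c = a) → a ∈ Ideal.span {c} := fun a c ⟨t, ht⟩ =>
        Submodule.mem_span_singleton.mpr ⟨t, by rw [smul_eq_mul, ht]⟩
      have hmemspan' : ∀ a c : R, a ∈ Ideal.span {c} → ∃ t, t * c = a := fun a c ha => by
        obtain ⟨t, ht⟩ := Submodule.mem_span_singleton.mp ha
        exact ⟨t, by rw [← smul_eq_mul, ht]⟩
      have hspan1 : Ideal.span {e₁} < I := by
        rw [← hspan]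
        refine lt_of_le_of_ne (Ideal.span_le.mpr (Set.singleton_subset_iff.mpr
          (hmemspan _ _ ⟨e₁, he₁e⟩))) (fun heq => ?_)
        obtain ⟨v, hv⟩ := hmemspan' e e₁ (heq ▸ Submodule.mem_span_singleton_self e)
        refine he₁e' ?_
        calc e₁ = e * e₁ := hee₁.symm
          _ = v * (e₁ * e₁) := by rw [← hv, mul_assoc]
          _ = e := by rw [he₁, hv]
      have hspan2 : Ideal.span {e₂} < I := by
        rw [← hspan]
        refine lt_of_le_of_ne (Ideal.span_le.mpr (Set.singleton_subset_iff.mpr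
          (hmemspan _ _ ⟨e₂, he₂e⟩))) (fun heq => ?_)
        obtain ⟨v, hv⟩ := hmemspan' e e₂ (heq ▸ Submodule.mem_span_singleton_self e)
        refine he₁0 ?_
        calc e₁ = e * e₁ := hee₁.symm
          _ = v * (e₂ * e₁) := by rw [← hv, mul_assoc]
          _ = 0 := by rw [h21, mul_zero]
      haveI hF1 : Finite (Corner e₁ he₁) := ih _ hspan1 e₁ he₁ rfl
      haveI hF2 : Finite (Corner e₂ he₂) := ih _ hspan2 e₂ he₂ rfl
      have hoffmul : ∀ (f g : R) (hfg : g * f = 0) (u v : R), f * u * g = u → f * v * g = v →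
          u * v = 0 := by
        intro f g hfg u v hu hv
        calc u * v = (f * u * g) * (f * v * g) := by rw [hu, hv]
          _ = f * u * (g * f) * (v * g) := by simp only [← mul_assoc]
          _ = 0 := by rw [hfg, mul_zero, zero_mul]
      have hVfin : ∀ (f g : R), IsIdempotentElem f → IsIdempotentElem g → g * f = 0 →
          {z : R | f * z * g = z}.Finite := by
        intro f g hf hg hfg
        apply finite_of_nilpotent_sums h2 hB hcl
        intro a ha b hb
        refine ⟨2, ?_⟩
        rw [pow_two, add_mul, mul_add, mul_add, hoffmul f g hfg a a ha ha,
          hoffmul f g hfg a b ha hb, hoffmul f g hfg b a hb ha, hoffmul f g hfg b b hb hb]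
        simp
      have hV12 := hVfin e₁ e₂ he₁ he₂ h21
      have hV21 := hVfin e₂ e₁ he₂ he₁ h12
      haveI := hV12.to_subtype
      haveI := hV21.to_subtype
      have hdecomp : ∀ z : Corner e he,
          z.1 = e₁*z.1*e₁ + e₁*z.1*e₂ + e₂*z.1*e₁ + e₂*z.1*e₂ := by
        intro z
        have h1 : (e₁ + e₂) * z.1 * (e₁ + e₂) = z.1 := by rw [hesum]; exact z.2
        calc z.1 = (e₁ + e₂) * z.1 * (e₁ + e₂) := h1.symm
          _ = e₁*z.1*e₁ + e₁*z.1*e₂ + e₂*z.1*e₁ + e₂*z.1*e₂ := by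
            rw [add_mul e₁ e₂ z.1, add_mul, mul_add, mul_add]
            abel
      have hmap : Function.Injective (fun z : Corner e he =>
          ((Corner.cmk he₁ z.1, Corner.cmk he₂ z.1,
            (⟨e₁ * z.1 * e₂, proj_mem2 he₁ he₂ z.1⟩ : {w : R | e₁ * w * e₂ = w}),
            (⟨e₂ * z.1 * e₁, proj_mem2 he₂ he₁ z.1⟩ : {w : R | e₂ * w * e₁ = w})) :
            Corner e₁ he₁ × Corner e₂ he₂ × {w : R | e₁ * w * e₂ = w} ×
              {w : R | e₂ * w * e₁ = w})) := by
        intro a b hab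
        have c1 : e₁*a.1*e₁ = e₁*b.1*e₁ := congrArg (fun p => (p.1 : Corner e₁ he₁).1) hab
        have c2 : e₂*a.1*e₂ = e₂*b.1*e₂ := congrArg (fun p => (p.2.1 : Corner e₂ he₂).1) hab
        have c3 : e₁*a.1*e₂ = e₁*b.1*e₂ := congrArg (fun p => (p.2.2.1 : R)) hab
        have c4 : e₂*a.1*e₁ = e₂*b.1*e₁ := congrArg (fun p => (p.2.2.2 : R)) hab
        refine Subtype.ext ?_
        rw [hdecomp a, hdecomp b, c1, c2, c3, c4]
      exact Finite.of_injective _ hmap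
    · haveI := Corner.cornerArtinian (R := R) he
      exact base_finite _ (Corner.cornerTwoIsUnit h2 he) hB
        (Corner.cliqueBdd_corner h2 hcl he)
        (fun x hx => by
          by_contra hc
          push_neg at hc
          exact hex ⟨x, hx, hc.1, hc.2⟩)


/-- A left Artinian ring in which `2` is a unit and whose unit graph has finite
clique number is a finite ring. -/
theorem finite_of_isArtinianRing_of_ecliqueNum_lt_top (R : Type*) [Ring R]
    [IsArtinianRing R] (h2 : IsUnit (2 : R)) (hclique : ecliqueNum (unitGraph R) ≠ ⊤) :
    Finite R := by
  have hcl : CliqueBdd R (ecliqueNum (unitGraph R)) := by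
    intro s hs
    have hclq : (unitGraph R).IsClique s := fun a ha b hb hab => (⟨hab, hs ha hb hab⟩ : a ≠ b ∧ IsUnit (a + b))
    exact le_iSup₂ (f := fun (t : Set R) (_ : t ∈ {t : Set R | (unitGraph R).IsClique t}) =>
      t.encard) s hclq
  have h1 : IsIdempotentElem (1 : R) := IsIdempotentElem.one
  haveI : Finite (Corner (1 : R) h1) :=
    corner_finite R h2 hclique hcl (Ideal.span {1}) 1 h1 rfl
  exact @Finite.of_injective R (Corner (1 : R) h1) this
    (fun r : R => (⟨r, by simp⟩ : Corner (1 : R) h1))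
    (fun a b hab => congrArg Subtype.val hab)
end

section
/- Let R be a ring such that the clique number of the unit graph G(R) is finite, R has only finitely many maximal left ideals, and 2 is a unit of R. Then R is a finite ring. -/
open scoped Pointwise


/-- A ring with finitely many maximal left ideals is Dedekind-finite. -/
lemma aux_df {R : Type*} [Ring R] (hmax : {I : Ideal R | I.IsMaximal}.Finite)
    {x y : R} (hxy : x * y = 1) : y * x = 1 := by
  classical
  by_contra hne
  set e : R := 1 - y * x with he
  have hene : e ≠ 0 := fun h => hne (by
    have := sub_eq_zero.mp (he ▸ h); exact this.symm)
  have hxe : x * e = 0 := by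
    rw [he, mul_sub, mul_one, ← mul_assoc, hxy, one_mul, sub_self]
  have hey : e * y = 0 := by
    rw [he, sub_mul, one_mul, mul_assoc, hxy, mul_one, sub_self]
  have hee : e * e = e := by
    conv_lhs => rw [he]
    rw [sub_mul, one_mul, mul_assoc, hxe, mul_zero, sub_zero]
  have hpow : ∀ i : ℕ, x ^ i * y ^ i = 1 := by
    intro i; induction i with
    | zero => simp
    | succ n ih =>
      rw [pow_succ, pow_succ', mul_assoc, ← mul_assoc x, hxy, one_mul, ih]
  have h1 : ∀ (t : R) (i d : ℕ), t ^ (i + d + 1) = t ^ i * t ^ (d + 1) := fun t i d => by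
    rw [pow_succ, pow_add, mul_assoc, ← pow_succ]
  have h2 : ∀ (t : R) (j d : ℕ), t ^ (j + d + 1) = t ^ (d + 1) * t ^ j := fun t j d => by
    rw [← pow_add]; congr 1; omega
  have hxy2 : ∀ i d : ℕ, x ^ i * y ^ (i + d + 1) = y ^ (d + 1) := fun i d => by
    rw [h1 y i d, ← mul_assoc, hpow, one_mul]
  have hxy3 : ∀ j d : ℕ, x ^ (j + d + 1) * y ^ j = x ^ (d + 1) := fun j d => by
    rw [h2 x j d, mul_assoc, hpow, mul_one]
  have hey' : ∀ d : ℕ, e * y ^ (d + 1) = 0 := fun d => by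
    rw [pow_succ', ← mul_assoc, hey, zero_mul]
  have hxe' : ∀ d : ℕ, x ^ (d + 1) * e = 0 := fun d => by
    rw [pow_succ, mul_assoc, hxe, mul_zero]
  set f : ℕ → R := fun i => y ^ i * e * x ^ i with hf
  have hff : ∀ i, f i * f i = f i := fun i => by
    show y ^ i * e * x ^ i * (y ^ i * e * x ^ i) = y ^ i * e * x ^ i
    simp only [mul_assoc]
    rw [← mul_assoc (x ^ i) (y ^ i), hpow, one_mul, ← mul_assoc e e, hee]
  have hxf : ∀ i, x ^ i * (f i * y ^ i) = e := fun i => by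
    show x ^ i * (y ^ i * e * x ^ i * y ^ i) = e
    simp only [mul_assoc]
    rw [hpow, mul_one, ← mul_assoc, hpow, one_mul]
  have hfne : ∀ i, f i ≠ 0 := fun i h => by
    have : e = 0 := by rw [← hxf i, h, zero_mul, mul_zero]
    exact hene this
  have key : ∀ i d : ℕ, f i * f (i + d + 1) = 0 := fun i d => by
    show y ^ i * e * x ^ i * (y ^ (i + d + 1) * e * x ^ (i + d + 1)) = 0
    simp only [mul_assoc]
    rw [← mul_assoc (x ^ i) (y ^ (i + d + 1)), hxy2 i d, ← mul_assoc e (y ^ (d + 1)),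
      hey' d, zero_mul, mul_zero]
  have key' : ∀ j d : ℕ, f (j + d + 1) * f j = 0 := fun j d => by
    show y ^ (j + d + 1) * e * x ^ (j + d + 1) * (y ^ j * e * x ^ j) = 0
    simp only [mul_assoc]
    rw [← mul_assoc (x ^ (j + d + 1)) (y ^ j), hxy3 j d, ← mul_assoc (x ^ (d + 1)) e,
      hxe' d, zero_mul, mul_zero, mul_zero]
  have horth : ∀ i j : ℕ, i ≠ j → f i * f j = 0 := by
    intro i j hij
    rcases Nat.lt_or_ge i j with h | h
    · obtain ⟨d, rfl⟩ : ∃ d, j = i + d + 1 := ⟨j - i - 1, by omega⟩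
      exact key i d
    · have h' : j < i := lt_of_le_of_ne h (Ne.symm hij)
      obtain ⟨d, rfl⟩ : ∃ d, i = j + d + 1 := ⟨i - j - 1, by omega⟩
      exact key' j d
  have hproper : ∀ i, Ideal.span {1 - f i} ≠ ⊤ := by
    intro i ht
    have h1m : (1 : R) ∈ Ideal.span {1 - f i} := ht ▸ Submodule.mem_top
    obtain ⟨r, hr⟩ := Submodule.mem_span_singleton.mp h1m
    have h0 : f i = 0 := by
      calc f i = 1 * f i := (one_mul _).symm
      _ = (r • (1 - f i)) * f i := by rw [hr]
      _ = r * ((1 - f i) * f i) := by rw [smul_eq_mul, mul_assoc]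
      _ = 0 := by rw [sub_mul, one_mul, hff, sub_self, mul_zero]
    exact hfne i h0
  choose M hM using fun i => Ideal.exists_le_maximal _ (hproper i)
  have hmemj : ∀ i j, i ≠ j → f i ∈ M j := by
    intro i j hij
    have h1 : f i • (1 - f j) ∈ Ideal.span {1 - f j} :=
      Submodule.smul_mem _ _ (Ideal.subset_span (Set.mem_singleton _))
    have h2 : f i • (1 - f j) = f i := by
      rw [smul_eq_mul, mul_sub, mul_one, horth i j hij, sub_zero]
    exact (hM j).2 (h2 ▸ h1)
  have hnotmem : ∀ i, f i ∉ M i := by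
    intro i h
    have h1 : (1 : R) ∈ M i :=
      (sub_add_cancel 1 (f i)) ▸ Submodule.add_mem _
        ((hM i).2 (Ideal.subset_span (Set.mem_singleton _))) h
    exact (hM i).1.ne_top ((Ideal.eq_top_iff_one _).mpr h1)
  have hinj : Function.Injective fun i => (⟨M i, (hM i).1⟩ : {I : Ideal R // I.IsMaximal}) := by
    intro i j hij
    by_contra hne'
    have hne'' : i ≠ j := fun h => hne' h
    have : f i ∈ M i := by
      have := hmemj i j hne''
      rwa [show M j = M i from congrArg Subtype.val hij.symm] at this
    exact hnotmem i this
  have : Finite {I : Ideal R // I.IsMaximal} := hmax.to_subtype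
  haveI : Finite ℕ := Finite.of_injective _ hinj
  exact not_finite ℕ

/-- In a ring with finitely many maximal left ideals, an element lying outside every
maximal left ideal is a unit. -/
lemma aux_unit {R : Type*} [Ring R] (hmax : {I : Ideal R | I.IsMaximal}.Finite)
    {z : R} (hz : ∀ I : Ideal R, I.IsMaximal → z ∉ I) : IsUnit z := by
  have hspan : Ideal.span {z} = ⊤ := by
    by_contra h
    obtain ⟨M, hMmax, hle⟩ := Ideal.exists_le_maximal _ h
    exact hz M hMmax (hle (Ideal.subset_span (Set.mem_singleton _)))
  have h1m : (1 : R) ∈ Ideal.span {z} := hspan ▸ Submodule.mem_top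
  obtain ⟨r, hr⟩ := Submodule.mem_span_singleton.mp h1m
  rw [smul_eq_mul] at hr
  exact ⟨⟨z, r, aux_df hmax hr, hr⟩, rfl⟩

/-- If the unit graph of `R` has finite clique number, `R` has only finitely many
maximal left ideals, and `2` is a unit of `R`, then `R` is a finite ring. -/
theorem finite_of_ecliqueNum_lt_top_of_finite_maximals (R : Type*) [Ring R]
    (hclique : ecliqueNum (unitGraph R) ≠ ⊤)
    (hmax : {I : Ideal R | I.IsMaximal}.Finite)
    (h2 : IsUnit (2 : R)) : Finite R := by
  classical
  by_contra hfin
  rw [not_finite_iff_infinite] at hfin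
  haveI := hfin
  set v : R := ↑h2.unit⁻¹ with hv
  have h2v : (2 : R) * v = 1 := by
    have hmi := h2.unit.mul_inv
    rwa [h2.unit_spec] at hmi
  have hvv : v + v = 1 := by
    calc v + v = (1 + 1) * v := by rw [add_mul, one_mul]
    _ = 1 := by rw [one_add_one_eq_two, h2v]
  obtain ⟨N, hN⟩ := WithTop.ne_top_iff_exists.mp hclique
  have hbound : ∀ s : Finset R, (unitGraph R).IsClique ↑s → s.card ≤ N := by
    intro s hs
    have h1 : ((s : Set R)).encard ≤ ecliqueNum (unitGraph R) := by
      unfold ecliqueNum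
      exact le_biSup _ hs
    rw [Set.encard_coe_eq_coe_finsetCard, ← hN] at h1
    exact WithTop.coe_le_coe.mp h1
  set Mx : Finset (Ideal R) := hmax.toFinset with hMx
  set If : Finset (Ideal R) := Mx.filter (fun m => ¬ m.toAddSubgroup.FiniteIndex) with hIf
  set K : AddSubgroup R :=
    ⨅ m ∈ Mx.filter (fun m => m.toAddSubgroup.FiniteIndex), m.toAddSubgroup with hK
  have hKfi : K.FiniteIndex :=
    AddSubgroup.finiteIndex_iInf' _ (fun m hm => (Finset.mem_filter.mp hm).2)
  haveI := hKfi
  haveI : Fintype (R ⧸ K) := Fintype.ofFinite _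
  have step : ∀ s : Finset R, (unitGraph R).IsClique ↑s → (∀ c ∈ s, c - v ∈ K) →
      ∃ a : R, a - v ∈ K ∧ a ∉ s ∧ (∀ m ∈ If, ∀ c ∈ s, a + c ∉ m) := by
    intro s hcl hsub
    by_contra hno
    push_neg at hno
    set ι := (R ⧸ K) × ((↥s) ⊕ (↥If × ↥s)) with hι
    set Hf : ι → AddSubgroup R := fun p =>
      Sum.elim (fun _ => (⊥ : AddSubgroup R)) (fun q => q.1.1.toAddSubgroup) p.2 with hHf
    set gf : ι → R := fun p =>
      Sum.elim (fun c => (Quotient.out p.1 - v) + c.1)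
        (fun q => (Quotient.out p.1 - v) + (- q.2.1)) p.2 with hgf
    have hcovers : ⋃ i ∈ (Finset.univ : Finset ι), gf i +ᵥ (Hf i : Set R) = Set.univ := by
      rw [Set.eq_univ_iff_forall]
      intro z
      rw [Set.mem_iUnion₂]
      set q : R ⧸ K := QuotientAddGroup.mk z with hq
      have hzq : - Quotient.out q + z ∈ K :=
        QuotientAddGroup.eq.mp ((QuotientAddGroup.out_eq' q).trans hq)
      set w : R := v + (- Quotient.out q + z) with hw
      have hwK : w - v ∈ K := by
        have hwv : w - v = - Quotient.out q + z := by rw [hw]; abel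
        rw [hwv]; exact hzq
      have hzw : z = (Quotient.out q - v) + w := by rw [hw]; abel
      by_cases hws : w ∈ s
      · refine ⟨(q, Sum.inl ⟨w, hws⟩), Finset.mem_univ _, ?_⟩
        refine Set.mem_vadd_set.mpr ⟨0, by simp [hHf], ?_⟩
        show gf (q, Sum.inl ⟨w, hws⟩) +ᵥ (0:R) = z
        simp only [hgf, Sum.elim_inl, vadd_eq_add, add_zero]
        exact hzw.symm
      · obtain ⟨m, hmIf, c, hcs, hmc⟩ := hno w hwK hws
        refine ⟨(q, Sum.inr ⟨⟨m, hmIf⟩, ⟨c, hcs⟩⟩), Finset.mem_univ _, ?_⟩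
        refine Set.mem_vadd_set.mpr ⟨w + c, ?_, ?_⟩
        · show w + c ∈ (Hf (q, Sum.inr ⟨⟨m, hmIf⟩, ⟨c, hcs⟩⟩) : Set R)
          simp only [hHf, Sum.elim_inr]
          exact (Submodule.mem_toAddSubgroup _).mpr hmc
        · show gf (q, Sum.inr ⟨⟨m, hmIf⟩, ⟨c, hcs⟩⟩) +ᵥ (w + c) = z
          simp only [hgf, Sum.elim_inr, vadd_eq_add]
          rw [hzw]; abel
    obtain ⟨k, -, hk⟩ := AddSubgroup.exists_finiteIndex_of_leftCoset_cover hcovers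
    rcases k with ⟨q, (c | mc)⟩
    · have hb : (⊥ : AddSubgroup R).index = 0 := by
        rw [AddSubgroup.index_bot]; exact Nat.card_eq_zero_of_infinite
      have hk' : (⊥ : AddSubgroup R).FiniteIndex := hk
      exact hk'.index_ne_zero hb
    · have hk' : (mc.1.1.toAddSubgroup).FiniteIndex := hk
      exact (Finset.mem_filter.mp mc.1.2).2 hk'
  have grow : ∀ n : ℕ, ∃ s : Finset R, s.card = n ∧ (unitGraph R).IsClique ↑s ∧
      ∀ c ∈ s, c - v ∈ K := by
    intro n
    induction n with
    | zero => exact ⟨∅, rfl, by simp [SimpleGraph.isClique_empty], by simp⟩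
    | succ n ih =>
      obtain ⟨s, hcard, hcl, hsub⟩ := ih
      obtain ⟨a, haK, has, havoid⟩ := step s hcl hsub
      refine ⟨insert a s, ?_, ?_, ?_⟩
      · rw [Finset.card_insert_of_notMem has, hcard]
      · rw [Finset.coe_insert]
        refine hcl.insert ?_
        intro c hcs hac
        have hnotmem : ∀ I : Ideal R, I.IsMaximal → a + c ∉ I := by
          intro I hImax hmem
          by_cases hIfi : I.toAddSubgroup.FiniteIndex
          · have hIK : K ≤ I.toAddSubgroup := by
              have hIn : I ∈ Mx.filter (fun m => m.toAddSubgroup.FiniteIndex) :=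
                Finset.mem_filter.mpr ⟨hmax.mem_toFinset.mpr hImax, hIfi⟩
              exact iInf₂_le I hIn
            have hsum : (a - v) + (c - v) ∈ I :=
              (Submodule.mem_toAddSubgroup _).mp (hIK (K.add_mem haK (hsub c hcs)))
            have h1I : (1 : R) ∈ I := by
              have hd : a + c - ((a - v) + (c - v)) ∈ I := I.sub_mem hmem hsum
              have he' : a + c - ((a - v) + (c - v)) = v + v := by abel
              rwa [he', hvv] at hd
            exact hImax.ne_top ((Ideal.eq_top_iff_one _).mpr h1I)
          · have hIn : I ∈ If := Finset.mem_filter.mpr ⟨hmax.mem_toFinset.mpr hImax, hIfi⟩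
            exact havoid I hIn c hcs hmem
        exact ⟨hac, aux_unit hmax hnotmem⟩
      · intro c hc
        rcases Finset.mem_insert.mp hc with rfl | hc
        · exact haK
        · exact hsub c hc
  obtain ⟨s, hcard, hcl, -⟩ := grow (N + 1)
  have := hbound s hcl
  omega
end

section
/- Let R be a ring such that the clique number of the unit graph G(R) is finite and 2 is a unit of R. Then the Jacobson radical J(R) is a finite set. -/
lemma exists_left_inv_one_add_of_mem_jacobson_bot {R : Type*} [Ring R] {x : R}
    (hx : x ∈ (⊥ : TwoSidedIdeal R).jacobson) : ∃ z : R, z * (1 + x) = 1 := by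
  obtain ⟨z, hz⟩ := TwoSidedIdeal.mem_jacobson_iff.mp hx 1
  rw [TwoSidedIdeal.mem_bot, sub_eq_zero, mul_one] at hz
  exact ⟨z, by rw [mul_add, mul_one, add_comm, hz]⟩

lemma isUnit_one_add_of_mem_jacobson_bot {R : Type*} [Ring R] {x : R}
    (hx : x ∈ (⊥ : TwoSidedIdeal R).jacobson) : IsUnit (1 + x) := by
  obtain ⟨z, hz⟩ := exists_left_inv_one_add_of_mem_jacobson_bot hx
  have hzx : -(z * x) ∈ (⊥ : TwoSidedIdeal R).jacobson :=
    TwoSidedIdeal.neg_mem _ (TwoSidedIdeal.mul_mem_left _ _ _ hx)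
  have hz' : z = 1 + -(z * x) := by
    have : z + z * x = 1 := by rw [← mul_one z, mul_assoc, one_mul, ← mul_add] ; exact hz
    rw [← this]; abel
  obtain ⟨w, hw⟩ := exists_left_inv_one_add_of_mem_jacobson_bot hzx
  rw [← hz'] at hw
  have hxw : 1 + x = w := by
    calc 1 + x = (w * z) * (1 + x) := by rw [hw, one_mul]
    _ = w * (z * (1 + x)) := by rw [mul_assoc]
    _ = w := by rw [hz, mul_one]
  exact ⟨⟨1 + x, z, by rw [hxw]; exact hw, hz⟩, rfl⟩

/-- If the unit graph of `R` has finite clique number and `2` is a unit of `R`,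
then the Jacobson radical of `R` is a finite set. -/
theorem finite_jacobson_of_ecliqueNum_lt_top (R : Type*) [Ring R]
    (hclique : ecliqueNum (unitGraph R) ≠ ⊤) (h2 : IsUnit (2 : R)) :
    (ringJacobson R : Set R).Finite := by
  set J : Set R := (ringJacobson R : Set R) with hJ
  set S : Set R := (fun j => 1 + j) '' J with hS
  have hinj : Function.Injective (fun j : R => 1 + j) := fun a b h => by
    simpa using h
  have hcard : S.encard = J.encard := hinj.encard_image J
  have hclq : (unitGraph R).IsClique S := by
    rintro a ⟨j, hj, rfl⟩ b ⟨k, hk, rfl⟩ hab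
    refine ⟨hab, ?_⟩
    have hjkJ : (↑h2.unit⁻¹ : R) * (j + k) ∈ ringJacobson R :=
      TwoSidedIdeal.mul_mem_left _ _ _ (TwoSidedIdeal.add_mem _ hj hk)
    have hu : IsUnit (1 + (↑h2.unit⁻¹ : R) * (j + k)) :=
      isUnit_one_add_of_mem_jacobson_bot hjkJ
    have h21 : (2 : R) * ↑h2.unit⁻¹ = 1 := by
      simp [h2.unit.mul_inv]
    have heq : (1 + j) + (1 + k) = 2 * (1 + (↑h2.unit⁻¹ : R) * (j + k)) := by
      rw [mul_add, mul_one, ← mul_assoc, h21, one_mul, ← one_add_one_eq_two]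
      abel
    rw [heq]
    exact h2.mul hu
  have hle : S.encard ≤ ecliqueNum (unitGraph R) := by
    exact le_iSup₂ (f := fun (s : Set R) (_ : s ∈ {s : Set R | (unitGraph R).IsClique s}) =>
      s.encard) S hclq
  rw [hcard] at hle
  rw [← Set.encard_ne_top_iff]
  intro htop
  rw [htop, top_le_iff] at hle
  exact hclique hle
end

section
/- Let R be a ring such that the independence number α(G(R)) of the unit graph of R is finite and satisfies α(G(R)) ≥ 3. Then R is a finite ring. -/
private lemma indep_finite' {R : Type*} [Ring R] (h : eindepNum (unitGraph R) ≠ ⊤)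
    (S : Set R) (hS : S.Pairwise fun a b => ¬ (unitGraph R).Adj a b) : S.Finite := by
  have hle : S.encard ≤ eindepNum (unitGraph R) := by
    apply le_iSup₂ (f := fun (s : Set R) (_ : s ∈ {s : Set R | s.Pairwise fun a b => ¬ (unitGraph R).Adj a b}) => s.encard) S hS
  rw [← Set.encard_ne_top_iff]
  intro htop
  exact h (top_le_iff.mp (htop ▸ hle))

private lemma finite_aux' {R : Type*} [Ring R] [Nontrivial R]
    (h : eindepNum (unitGraph R) ≠ ⊤)
    (a : R) (ha0 : a ≠ 0) (hl : ¬ ∃ b : R, b * a = 1) : Finite R := by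
  classical
  set f : R → R := fun r => r * a with hf
  have hrange : (Set.range f).Pairwise fun x y => ¬ (unitGraph R).Adj x y := by
    rintro x ⟨r, rfl⟩ y ⟨s, rfl⟩ hxy ⟨-, hu⟩
    obtain ⟨u, hu⟩ := hu
    apply hl
    refine ⟨(↑u⁻¹ : R) * (r + s), ?_⟩
    have h1 : (r + s) * a = (u : R) := by rw [add_mul]; exact hu.symm
    rw [mul_assoc, h1]
    exact u.inv_mul
  have hann : ({r : R | r * a = 0}).Pairwise fun x y => ¬ (unitGraph R).Adj x y := by
    rintro x hx y hy hxy ⟨-, hu⟩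
    obtain ⟨u, hu⟩ := hu
    apply ha0
    have h0 : (x + y) * a = 0 := by
      rw [add_mul, hx, hy, add_zero]
    calc a = ↑u⁻¹ * ((x + y) * a) := by rw [← mul_assoc, ← hu, u.inv_mul, one_mul]
      _ = 0 := by rw [h0, mul_zero]
  have h1 : (Set.range f).Finite := indep_finite' h _ hrange
  have h2 : ({r : R | r * a = 0}).Finite := indep_finite' h _ hann
  have := h1.to_subtype
  have := h2.to_subtype
  set σ : Set.range f → R := Set.rangeSplitting f with hσ
  have hσap : ∀ y : Set.range f, f (σ y) = y := Set.apply_rangeSplitting f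
  refine Finite.of_injective (fun r : R =>
    ((⟨f r, Set.mem_range_self r⟩ : Set.range f),
     (⟨r - σ ⟨f r, Set.mem_range_self r⟩, by
        simp only [Set.mem_setOf_eq]
        have : f (r - σ ⟨f r, Set.mem_range_self r⟩) = 0 := by
          show (r - σ ⟨f r, Set.mem_range_self r⟩) * a = 0
          rw [sub_mul]
          have := hσap ⟨f r, Set.mem_range_self r⟩
          show r * a - f (σ ⟨f r, Set.mem_range_self r⟩) = 0
          rw [this]
          simp [hf]
        exact this⟩ : {r : R | r * a = 0}))) ?_
  rintro r r' hrr
  simp only [Prod.mk.injEq, Subtype.mk.injEq] at hrr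
  obtain ⟨he, hs⟩ := hrr
  have : (⟨f r, Set.mem_range_self r⟩ : Set.range f) = ⟨f r', Set.mem_range_self r'⟩ :=
    Subtype.ext he
  rw [this] at hs
  exact sub_left_inj.mp hs


/-- If the independence number of the unit graph of `R` is finite and at least `3`,
then `R` is a finite ring. -/
theorem finite_of_three_le_eindepNum_lt_top (R : Type*) [Ring R]
    (hindep : eindepNum (unitGraph R) ≠ ⊤) (h3 : 3 ≤ eindepNum (unitGraph R)) :
    Finite R := by
  classical
  by_cases htriv : Subsingleton R
  · exact Finite.of_subsingleton
  have hnt : Nontrivial R := not_subsingleton_iff_nontrivial.mp htriv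
  by_cases hdiv : ∀ x : R, x ≠ 0 → IsUnit x
  · exfalso
    have hle : eindepNum (unitGraph R) ≤ 2 := by
      refine iSup₂_le fun s hs => ?_
      rcases s.eq_empty_or_nonempty with rfl | ⟨a, ha⟩
      · simp
      have hsub : s ⊆ {a, -a} := by
        intro b hb
        by_cases hab : b = a
        · exact Or.inl hab
        · have hna := hs ha hb fun h => hab h.symm
          have hnu : ¬ IsUnit (a + b) := by
            intro hu
            exact hna ⟨fun h => hab h.symm, hu⟩
          have h0 : a + b = 0 := by
            by_contra h0
            exact hnu (hdiv _ h0)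
          right
          simp only [Set.mem_singleton_iff]
          exact eq_neg_of_add_eq_zero_right h0
      calc s.encard ≤ ({a, -a} : Set R).encard := Set.encard_mono hsub
        _ ≤ ({-a} : Set R).encard + 1 := Set.encard_insert_le {-a} a
        _ = 2 := by rw [Set.encard_singleton]; rfl
    have : (3 : ℕ∞) ≤ 2 := h3.trans hle
    norm_num at this
  push_neg at hdiv
  obtain ⟨a, ha0, hau⟩ := hdiv
  by_cases hl : ∃ b : R, b * a = 1
  · obtain ⟨b, hb⟩ := hl
    have hb0 : b ≠ 0 := by
      rintro rfl
      rw [zero_mul] at hb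
      exact zero_ne_one hb
    have hbl : ¬ ∃ c : R, c * b = 1 := by
      rintro ⟨c, hc⟩
      have hca : c = a := by
        calc c = c * (b * a) := by rw [hb, mul_one]
          _ = (c * b) * a := by rw [mul_assoc]
          _ = a := by rw [hc, one_mul]
      apply hau
      exact ⟨⟨a, b, by rw [← hca]; exact hc, hb⟩, rfl⟩
    exact finite_aux' hindep b hb0 hbl
  · exact finite_aux' hindep a ha0 hl
end

section
/- Let R be a ring and r a positive integer such that the unit graph G(R) is a complete r-partite graph. Then either R is a local ring with unique maximal left ideal m and r = |R/m| = 2^n for some natural number n ≥ 1, or R is a finite field. -/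
/-- A graph `G` is complete `r`-partite if its vertex set admits a partition into `r`
nonempty classes such that two vertices are adjacent iff they lie in different classes. -/
def IsCompleteRPartite {V : Type*} (G : SimpleGraph V) (r : ℕ) : Prop :=
  ∃ P : Fin r → Set V, (∀ v, ∃! i, v ∈ P i) ∧ (∀ i, (P i).Nonempty) ∧
    ∀ a b, G.Adj a b ↔ ∃ i j, i ≠ j ∧ a ∈ P i ∧ b ∈ P j

theorem nonunits_mul_closed {R : Type*} [Ring R] [Nontrivial R]
    (hadd : ∀ a b : R, ¬IsUnit a → ¬IsUnit b → ¬IsUnit (a + b)) :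
    ∀ s a : R, ¬IsUnit a → ¬IsUnit (s * a) := by
  intro s a ha hu
  obtain ⟨u, hu⟩ := hu
  set e := a * ↑u⁻¹ * s with he
  have hee : e * e = e := by
    calc e * e = a * ↑u⁻¹ * (s * a) * (↑u⁻¹ * s) := by rw [he]; noncomm_ring
      _ = a * ↑u⁻¹ * ↑u * (↑u⁻¹ * s) := by rw [← hu]
      _ = a * (↑u⁻¹ * ↑u) * (↑u⁻¹ * s) := by rw [mul_assoc a]
      _ = a * ↑u⁻¹ * s := by rw [u.inv_mul, mul_one, mul_assoc]
      _ = e := he.symm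
  by_cases heu : IsUnit e
  · have h1 : e = 1 := heu.mul_left_cancel (by rw [hee, mul_one])
    apply ha
    refine ⟨⟨a, ↑u⁻¹ * s, ?_, ?_⟩, rfl⟩
    · rw [← mul_assoc, ← he, h1]
    · rw [mul_assoc, ← hu, u.inv_mul]
  · have h1e : ¬IsUnit (1 - e) := by
      intro hv
      obtain ⟨v, hv⟩ := hv
      have h0 : e * (1 - e) = 0 := by rw [mul_sub, mul_one, hee, sub_self]
      have he0 : e = 0 := by
        calc e = e * ((1 - e) * ↑v⁻¹) := by rw [← hv, v.mul_inv, mul_one]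
          _ = e * (1 - e) * ↑v⁻¹ := (mul_assoc _ _ _).symm
          _ = 0 := by rw [h0, zero_mul]
      have hea : e * a = a := by
        calc e * a = a * ↑u⁻¹ * (s * a) := by rw [he]; noncomm_ring
          _ = a * ↑u⁻¹ * ↑u := by rw [← hu]
          _ = a := by rw [mul_assoc, u.inv_mul, mul_one]
      have ha0 : a = 0 := by rw [← hea, he0, zero_mul]
      have : (↑u : R) = 0 := by rw [hu, ha0, mul_zero]
      exact not_isUnit_zero (this ▸ u.isUnit)
    have := hadd e (1 - e) heu h1e
    rw [add_sub_cancel] at this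
    exact this isUnit_one

/-- If the unit graph of a ring `R` is a complete `r`-partite graph (`r ≥ 1`), then
either `R` is a local ring with unique maximal left ideal `m` and
`r = |R/m| = 2^n` for some `n ≥ 1`, or `R` is a finite field. -/
theorem unitGraph_completeRPartite (R : Type*) [Ring R] [Nontrivial R] (r : ℕ)
    (hr : 0 < r) (h : IsCompleteRPartite (unitGraph R) r) :
    (∃ m : Ideal R, m.IsMaximal ∧ (∀ m' : Ideal R, m'.IsMaximal → m' = m) ∧
      ∃ n : ℕ, 1 ≤ n ∧ r = 2 ^ n ∧ Nat.card (R ⧸ m) = 2 ^ n) ∨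
    (Finite R ∧ IsField R) := by
  classical
  obtain ⟨P, huniq, hne, hadj⟩ := h
  -- vertices in the same part are not adjacent
  have hsame : ∀ (i : Fin r) (a b : R), a ∈ P i → b ∈ P i → ¬ (unitGraph R).Adj a b := by
    intro i a b ha hb hAdj
    obtain ⟨i', j', hij, ha', hb'⟩ := (hadj a b).1 hAdj
    obtain ⟨ia, _, hauniq⟩ := huniq a
    obtain ⟨ib, _, hbuniq⟩ := huniq b
    exact hij (((hauniq _ ha').trans (hauniq _ ha).symm).trans
      ((hbuniq _ hb).trans (hbuniq _ hb').symm))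
  have hdiff : ∀ {i j : Fin r} {a b : R}, i ≠ j → a ∈ P i → b ∈ P j →
      (unitGraph R).Adj a b := fun hij ha hb => (hadj _ _).2 ⟨_, _, hij, ha, hb⟩
  obtain ⟨i0, hi0, _⟩ := huniq 0
  -- all nonunits lie in the part of 0
  have hmem0 : ∀ a : R, ¬IsUnit a → a ∈ P i0 := by
    intro a ha
    obtain ⟨i, hi, hiu⟩ := huniq a
    by_cases hia : i = i0
    · exact hia ▸ hi
    · exact absurd (by simpa using (hdiff hia hi hi0).2) ha
  -- nonunits are closed under addition
  have hadd : ∀ a b : R, ¬IsUnit a → ¬IsUnit b → ¬IsUnit (a + b) := by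
    intro a b ha hb hu
    by_cases hab : a = b
    · subst hab
      obtain ⟨u, hu⟩ := hu
      apply ha
      have hcomm : (↑u⁻¹ : R) * 2 = 2 * ↑u⁻¹ := by
        rw [mul_two, two_mul]
      refine ⟨⟨a, 2 * ↑u⁻¹, ?_, ?_⟩, rfl⟩
      · rw [← mul_assoc, mul_two a, ← hu, u.mul_inv]
      · rw [← hcomm, mul_assoc, two_mul a, ← hu, u.inv_mul]
    · exact hsame i0 a b (hmem0 a ha) (hmem0 b hb) ⟨hab, hu⟩
  have hmul := nonunits_mul_closed hadd
  -- the ideal of nonunits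
  let m : Ideal R :=
    { carrier := {x : R | ¬IsUnit x}
      add_mem' := fun {a b} ha hb => hadd a b ha hb
      zero_mem' := not_isUnit_zero
      smul_mem' := fun s a ha => hmul s a ha }
  have hmm : ∀ x : R, x ∈ m ↔ ¬IsUnit x := fun _ => Iff.rfl
  have hmtop : m ≠ ⊤ := by
    intro htop
    exact ((hmm 1).1 (htop ▸ Submodule.mem_top)) isUnit_one
  have hmax : m.IsMaximal := by
    refine ⟨hmtop, fun I hI => ?_⟩
    obtain ⟨x, hxI, hxm⟩ := SetLike.exists_of_lt hI
    exact Ideal.eq_top_of_isUnit_mem I hxI (not_not.1 hxm)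
  have huniqmax : ∀ m' : Ideal R, m'.IsMaximal → m' = m := by
    intro m' hm'
    have hle : m' ≤ m := by
      intro x hx
      rw [hmm]
      intro hxu
      exact hm'.ne_top (Ideal.eq_top_of_isUnit_mem m' hx hxu)
    exact hm'.eq_of_le hmtop hle
  by_cases hdr : ∀ x : R, x ≠ 0 → IsUnit x
  · -- division ring case: R is a finite field
    right
    have hfin : Finite R := by
      rw [← Set.finite_univ_iff]
      have hcover : (Set.univ : Set R) ⊆ ⋃ i, P i := by
        intro x _
        obtain ⟨i, hi, _⟩ := huniq x
        exact Set.mem_iUnion.2 ⟨i, hi⟩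
      refine Set.Finite.subset (Set.finite_iUnion fun i => ?_) hcover
      obtain ⟨a, ha⟩ := hne i
      refine Set.Finite.subset ((Set.finite_singleton (-a)).insert a) ?_
      intro x hx
      by_cases hxa : x = a
      · exact Set.mem_insert_iff.2 (Or.inl hxa)
      · have : ¬IsUnit (x + a) := fun hu => hsame i x a hx ha ⟨hxa, hu⟩
        have hx0 : x + a = 0 := by
          by_contra h0
          exact this (hdr _ h0)
        have hxeq : x = -a := eq_neg_of_add_eq_zero_left hx0
        exact Set.mem_insert_iff.2 (Or.inr (by simp [hxeq]))
      -- end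
    refine ⟨hfin, ?_⟩
    haveI : NoZeroDivisors R := by
      refine ⟨fun {a b} hab => ?_⟩
      by_cases ha : a = 0
      · exact Or.inl ha
      · right
        obtain ⟨u, hu⟩ := hdr a ha
        calc b = ↑u⁻¹ * (a * b) := by rw [← hu, ← mul_assoc, u.inv_mul, one_mul]
          _ = 0 := by rw [hab, mul_zero]
    haveI : IsDomain R := NoZeroDivisors.to_isDomain R
    exact Finite.isDomain_to_isField R
  · -- local ring case
    left
    push_neg at hdr
    obtain ⟨t, ht0, htm⟩ := hdr
    rw [← hmm] at htm
    -- 2 ∈ m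
    have h2m : (2 : R) ∈ m := by
      rw [hmm]
      intro h2
      -- -1 is in the part of 1
      obtain ⟨j1, hj1, hj1u⟩ := huniq 1
      have hn1 : (1 : R) ≠ -1 := by
        intro h1
        apply not_isUnit_zero (M₀ := R)
        have h20 : (2 : R) = 0 := by
          rw [← one_add_one_eq_two]
          simpa using congrArg (fun x : R => x + 1) h1
        exact h20 ▸ h2
      have hm1 : (-1 : R) ∈ P j1 := by
        obtain ⟨i, hi, _⟩ := huniq (-1 : R)
        by_cases hij : i = j1
        · exact hij ▸ hi
        · have hu := (hdiff (Ne.symm hij) hj1 hi).2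
          rw [add_neg_cancel] at hu
          exact absurd hu not_isUnit_zero
      -- y = 1 + t is in the part of 1 ...
      have hym : (1 + t : R) ∈ P j1 := by
        obtain ⟨i, hi, _⟩ := huniq (1 + t : R)
        by_cases hij : i = j1
        · exact hij ▸ hi
        · have hu := (hdiff hij hi hm1).2
          have heq : (1 + t : R) + -1 = t := by abel
          rw [heq] at hu
          exact absurd hu ((hmm t).1 htm)
      -- ... but adjacent to 1
      have hyt : (1 + t : R) ≠ 1 := by
        intro hy
        apply ht0
        have : (1 : R) + t = 1 + 0 := by rw [hy, add_zero]
        exact add_left_cancel this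
      have h2t : IsUnit ((1 + t : R) + 1) := by
        by_contra hnu
        apply (hmm 2).1 ?_ h2
        have h2eq : (2 : R) = ((1 + t) + 1) + (-t) := by
          rw [← one_add_one_eq_two]; abel
        rw [hmm, h2eq]
        exact hadd _ _ hnu ((hmm (-t)).1 (m.neg_mem htm))
      exact hsame j1 (1 + t) 1 hym hj1 ⟨hyt, h2t⟩
    -- every element doubled is in m
    have h2x : ∀ x : R, x + x ∈ m := by
      intro x
      have : x • (2 : R) ∈ m := m.smul_mem x h2m
      rwa [smul_eq_mul, mul_two] at this
    -- choose representatives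
    choose a ha using hne
    let f : Fin r → R ⧸ m := fun i => Submodule.Quotient.mk (a i)
    have hfinj : Function.Injective f := by
      intro i j hij
      by_contra hne'
      have hsub : a i - a j ∈ m := (Submodule.Quotient.eq m).1 hij
      have hsum : a i + a j ∈ m := by
        have heq : a i + a j = (a i - a j) + (a j + a j) := by abel
        rw [heq]
        exact m.add_mem hsub (h2x (a j))
      exact ((hmm _).1 hsum) (hdiff hne' (ha i) (ha j)).2
    have hfsurj : Function.Surjective f := by
      intro q
      obtain ⟨x, rfl⟩ := Submodule.Quotient.mk_surjective m q
      obtain ⟨i, hi, _⟩ := huniq x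
      refine ⟨i, ?_⟩
      by_cases hax : a i = x
      · simp [f, hax]
      · have hsum : a i + x ∈ m := by
          rw [hmm]
          intro hu
          exact hsame i (a i) x (ha i) hi ⟨hax, hu⟩
        have : a i - x ∈ m := by
          have heq : a i - x = (a i + x) - (x + x) := by abel
          rw [heq]
          exact m.sub_mem hsum (h2x x)
        exact (Submodule.Quotient.eq m).2 this
    have hequiv : (Fin r) ≃ (R ⧸ m) := Equiv.ofBijective f ⟨hfinj, hfsurj⟩
    have hcard : Nat.card (R ⧸ m) = r := by
      rw [← Nat.card_congr hequiv, Nat.card_eq_fintype_card, Fintype.card_fin]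
    haveI hfinq : Finite (R ⧸ m) := Finite.of_equiv _ hequiv
    haveI : Fintype (R ⧸ m) := Fintype.ofFinite _
    -- quotient is nontrivial, so r ≥ 2
    have hnt : Nontrivial (R ⧸ m) := by
      refine ⟨Submodule.Quotient.mk 1, 0, ?_⟩
      rw [Ne, Submodule.Quotient.mk_eq_zero, hmm]
      exact not_not.2 isUnit_one
    have hr2 : 2 ≤ r := by
      rw [← hcard]
      exact Finite.one_lt_card_iff_nontrivial.2 hnt
    -- every prime dividing r is 2
    have hprime : ∀ {p : ℕ}, p.Prime → p ∣ r → p = 2 := by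
      intro p hp hpd
      haveI : Fact p.Prime := ⟨hp⟩
      have hpd' : p ∣ Fintype.card (R ⧸ m) := by
        rwa [← Nat.card_eq_fintype_card, hcard]
      obtain ⟨g, hg⟩ := exists_prime_addOrderOf_dvd_card p hpd'
      have hgg : (2 : ℕ) • g = 0 := by
        obtain ⟨x, rfl⟩ := Submodule.Quotient.mk_surjective m g
        rw [two_nsmul, ← Submodule.Quotient.mk_add, Submodule.Quotient.mk_eq_zero]
        exact h2x x
      have : addOrderOf g ∣ 2 := addOrderOf_dvd_of_nsmul_eq_zero hgg
      rw [hg] at this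
      rcases (Nat.Prime.eq_one_or_self_of_dvd Nat.prime_two p this) with h1 | h2
      · exact absurd h1 hp.ne_one
      · exact h2
    have hk := Nat.eq_prime_pow_of_unique_prime_dvd hr.ne'
      (fun {d} hd hdd => hprime hd hdd)
    refine ⟨m, hmax, huniqmax, r.primeFactorsList.length, ?_, hk, hcard.trans hk⟩
    rcases Nat.eq_zero_or_pos r.primeFactorsList.length with h0 | h1
    · rw [h0, pow_zero] at hk; omega
    · exact h1
end

section
/- Let R be a local ring with unique maximal left ideal m such that the quotient R/m has cardinality 2^n for some natural number n ≥ 1. Then the unit graph G(R) is a complete 2^n-partite graph, whose parts are precisely the cosets of m in R. -/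
/-- If `R` is a local ring with unique maximal left ideal `m` and `|R/m| = 2^n` for
some `n ≥ 1`, then the unit graph `G(R)` is a complete `2^n`-partite graph whose
parts are precisely the cosets of `m` in `R`. -/
theorem unitGraph_completeRPartite_of_local (R : Type*) [Ring R] [Nontrivial R]
    (m : Ideal R) (hm : m.IsMaximal) (huniq : ∀ m' : Ideal R, m'.IsMaximal → m' = m)
    (n : ℕ) (hn : 1 ≤ n) (hcard : Nat.card (R ⧸ m) = 2 ^ n) :
    ∃ P : Fin (2 ^ n) → Set R,
      (∀ i, ∃ a : R, P i = {x : R | x - a ∈ m}) ∧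
      (∀ a : R, ∃ i, {x : R | x - a ∈ m} = P i) ∧
      (∀ v, ∃! i, v ∈ P i) ∧ (∀ i, (P i).Nonempty) ∧
      ∀ a b, (unitGraph R).Adj a b ↔ ∃ i j, i ≠ j ∧ a ∈ P i ∧ b ∈ P j := by
  classical
  have hne : m ≠ ⊤ := hm.ne_top
  have leftInv : ∀ x : R, x ∉ m → ∃ y : R, y * x = 1 := by
    intro x hx
    by_contra h
    push_neg at h
    have hspan : Ideal.span {x} ≠ ⊤ := by
      intro htop
      have h1 : (1:R) ∈ Ideal.span {x} := htop ▸ Submodule.mem_top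
      obtain ⟨y, hy⟩ := Submodule.mem_span_singleton.mp h1
      exact h y (by simpa [smul_eq_mul] using hy)
    obtain ⟨M, hM, hle⟩ := Ideal.exists_le_maximal _ hspan
    exact hx (huniq M hM ▸ hle (Ideal.subset_span rfl))
  have unit_iff : ∀ x : R, IsUnit x ↔ x ∉ m := by
    intro x
    constructor
    · rintro ⟨u, rfl⟩ hxm
      have h1 : (1:R) ∈ m := by
        have := m.mul_mem_left (↑u⁻¹) hxm
        simpa using this
      exact hne ((Ideal.eq_top_iff_one m).mpr h1)
    · intro hx
      obtain ⟨y, hy⟩ := leftInv x hx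
      by_cases he : x * y ∈ m
      · exfalso
        have h1e : (1 : R) - x * y ∉ m := by
          intro h
          have : (1:R) ∈ m := by simpa using m.add_mem h he
          exact hne ((Ideal.eq_top_iff_one m).mpr this)
        obtain ⟨w, hw⟩ := leftInv _ h1e
        have hx0 : ((1:R) - x * y) * x = 0 := by
          rw [sub_mul, one_mul, mul_assoc, hy, mul_one, sub_self]
        have hxz : x = 0 := by
          calc x = (w * ((1:R) - x*y)) * x := by rw [hw, one_mul]
          _ = w * (((1:R) - x*y) * x) := by rw [mul_assoc]
          _ = 0 := by rw [hx0, mul_zero]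
        exact hx (hxz ▸ m.zero_mem)
      · obtain ⟨z, hz⟩ := leftInv _ he
        have hee : (x*y) * ((1:R) - x * y) = 0 := by
          rw [mul_sub, mul_one, mul_assoc x y (x*y), ← mul_assoc y x y, hy, one_mul,
            sub_self]
        have h1 : (1:R) - x*y = 0 := by
          calc (1:R) - x*y = (z * (x*y)) * ((1:R) - x*y) := by rw [hz, one_mul]
          _ = z * ((x*y) * ((1:R) - x*y)) := by rw [mul_assoc]
          _ = 0 := by rw [hee, mul_zero]
        exact ⟨⟨x, y, (sub_eq_zero.mp h1).symm, hy⟩, rfl⟩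
  haveI : Finite (R ⧸ m) := Nat.finite_of_card_ne_zero (by rw [hcard]; positivity)
  have two_mem : (2:R) ∈ m := by
    by_contra h2
    have hu : IsUnit ((2:R)^n) := ((unit_iff 2).mpr h2).pow n
    have hc : (Nat.card (R ⧸ m)) • (Submodule.Quotient.mk (1:R) : R ⧸ m) = 0 :=
      card_nsmul_eq_zero'
    rw [hcard] at hc
    have hmk : (Submodule.Quotient.mk ((2:R)^n) : R ⧸ m) = 0 := by
      have h1 : ((2:R)^n) = (2^n : ℕ) • (1:R) := by
        simp [nsmul_eq_mul]
      calc (Submodule.Quotient.mk ((2:R)^n) : R ⧸ m) = m.mkQ ((2^n : ℕ) • (1:R)) := by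
            rw [← h1]; rfl
        _ = (2^n : ℕ) • m.mkQ (1:R) := map_nsmul _ _ _
        _ = 0 := by simpa using hc
    exact ((unit_iff _).mp hu) ((Submodule.Quotient.mk_eq_zero m).mp hmk)
  have two_smul_mem : ∀ x : R, x + x ∈ m := by
    intro x
    have := m.mul_mem_left x two_mem
    simpa [mul_two] using this
  have key : ∀ a b : R, a + b ∈ m ↔ a - b ∈ m := by
    intro a b
    constructor
    · intro h
      have h3 : a + b - (b + b) ∈ m := m.sub_mem h (two_smul_mem b)
      have h2 : a + b - (b + b) = a - b := by abel
      rwa [h2] at h3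
    · intro h
      have : a - b + (b + b) ∈ m := m.add_mem h (two_smul_mem b)
      have h2 : a - b + (b + b) = a + b := by abel
      rwa [h2] at this
  set e : (R ⧸ m) ≃ Fin (2 ^ n) := Finite.equivFinOfCardEq hcard with he
  have hsurj := Submodule.Quotient.mk_surjective m
  refine ⟨fun i => {x : R | (Submodule.Quotient.mk x : R ⧸ m) = e.symm i}, ?_, ?_, ?_, ?_, ?_⟩
  · intro i
    obtain ⟨a, ha⟩ := hsurj (e.symm i)
    refine ⟨a, ?_⟩
    ext x
    simp only [Set.mem_setOf_eq, ← ha]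
    rw [Submodule.Quotient.eq]
  · intro a
    refine ⟨e (Submodule.Quotient.mk a), ?_⟩
    ext x
    simp only [Set.mem_setOf_eq, Equiv.symm_apply_apply]
    exact (Submodule.Quotient.eq m).symm
  · intro v
    refine ⟨e (Submodule.Quotient.mk v), by simp, ?_⟩
    intro j hj
    simp only [Set.mem_setOf_eq] at hj
    rw [hj]; simp
  · intro i
    obtain ⟨a, ha⟩ := hsurj (e.symm i)
    exact ⟨a, ha⟩
  · intro a b
    constructor
    · rintro ⟨hab, hu⟩
      have h1 : a + b ∉ m := (unit_iff _).mp hu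
      have h2 : a - b ∉ m := fun h => h1 ((key a b).mpr h)
      have h3 : (Submodule.Quotient.mk a : R ⧸ m) ≠ Submodule.Quotient.mk b := by
        intro h; exact h2 ((Submodule.Quotient.eq m).mp h)
      exact ⟨e (Submodule.Quotient.mk a), e (Submodule.Quotient.mk b),
        fun h => h3 (e.injective h), by simp, by simp⟩
    · rintro ⟨i, j, hij, ha, hb⟩
      simp only [Set.mem_setOf_eq] at ha hb
      have h3 : (Submodule.Quotient.mk a : R ⧸ m) ≠ Submodule.Quotient.mk b := by
        rw [ha, hb]
        exact fun h => hij (e.symm.injective h)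
      have h2 : a - b ∉ m := fun h => h3 ((Submodule.Quotient.eq m).mpr h)
      refine ⟨fun h => h3 (by rw [h]), (unit_iff _).mpr fun h => h2 ((key a b).mp h)⟩
end

section
/- Let R be a finite field. Then the unit graph G(R) is a complete r-partite graph for some positive integer r. -/
/-- The unit graph of a finite field is a complete `r`-partite graph for some `r ≥ 1`. -/
theorem unitGraph_finiteField_completeRPartite (F : Type*) [Field F] [Finite F] :
    ∃ r : ℕ, 0 < r ∧ IsCompleteRPartite (unitGraph F) r := by

  classical
  have : Fintype F := Fintype.ofFinite F
  let s : Setoid F := ⟨fun x y => x = y ∨ x = -y, by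
    refine ⟨fun x => Or.inl rfl, ?_, ?_⟩
    · rintro x y (rfl | rfl)
      · exact Or.inl rfl
      · exact Or.inr (by simp)
    · rintro x y z (rfl | rfl) (rfl | rfl) <;> simp⟩
  let Q := Quotient s
  have hQ : Nonempty Q := ⟨⟦(0 : F)⟧⟩
  let e : Fin (Fintype.card Q) ≃ Q := (Fintype.equivFin Q).symm
  refine ⟨Fintype.card Q, Fintype.card_pos, fun i => {v | (⟦v⟧ : Q) = e i}, ?_, ?_, ?_⟩
  · intro v
    refine ⟨e.symm ⟦v⟧, (e.apply_symm_apply _).symm, fun i hi => ?_⟩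
    have hi' : (⟦v⟧ : Q) = e i := hi
    rw [hi', e.symm_apply_apply]
  · intro i
    obtain ⟨v, hv⟩ := Quotient.exists_rep (e i)
    exact ⟨v, hv⟩
  · intro a b
    constructor
    · rintro ⟨hne, hu⟩
      refine ⟨e.symm ⟦a⟧, e.symm ⟦b⟧, ?_, (e.apply_symm_apply _).symm,
        (e.apply_symm_apply _).symm⟩
      intro h
      have h2 : (⟦a⟧ : Q) = ⟦b⟧ := e.symm.injective h
      have h3 : a = b ∨ a = -b := Quotient.eq.mp h2
      rcases h3 with rfl | rfl
      · exact hne rfl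
      · exact (isUnit_iff_ne_zero.mp hu) (by ring)
    · rintro ⟨i, j, hij, ha, hb⟩
      have hq : (⟦a⟧ : Q) ≠ ⟦b⟧ := by
        simp only [Set.mem_setOf_eq] at ha hb
        rw [ha, hb]
        exact fun h => hij (e.injective h)
      have h3 : ¬ (a = b ∨ a = -b) := fun h => hq (Quotient.eq.mpr h)
      push_neg at h3
      refine ⟨h3.1, isUnit_iff_ne_zero.mpr fun h => h3.2 ?_⟩
      linear_combination h
end

section
/- Let R be a ring such that the unit graph G(R) is a complete r-partite graph for some positive integer r. Then R is a local ring, i.e., R has exactly one maximal left ideal; equivalently, for every x in R, either x is a unit or 1 - x is a unit. -/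
section Aux
variable {R : Type*} [Ring R] [Nontrivial R]

/-- In a ring where every element `x` has `x` or `1 - x` a unit, left invertible
elements are units. -/
lemma aux_isUnit_of_left_inv (hloc : ∀ x : R, IsUnit x ∨ IsUnit (1 - x))
    (a c : R) (hca : c * a = 1) : IsUnit a := by
  have he : (a * c) * (a * c) = a * c := by
    rw [mul_assoc, ← mul_assoc c a c, hca, one_mul]
  rcases hloc (a * c) with hu | hu
  · have h1 : a * c = 1 := by
      obtain ⟨u, hu⟩ := hu
      calc a * c = (↑u⁻¹ * ↑u) * (a * c) := by rw [u.inv_mul, one_mul]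
      _ = ↑u⁻¹ * ((a*c) * (a*c)) := by rw [hu, mul_assoc]
      _ = ↑u⁻¹ * (a*c) := by rw [he]
      _ = 1 := by rw [← hu, u.inv_mul]
    exact ⟨⟨a, c, h1, hca⟩, rfl⟩
  · exfalso
    have h2 : (1 - a*c) * (1 - a*c) = 1 - a*c := by
      rw [sub_mul, one_mul, mul_sub, mul_one, he]; abel
    obtain ⟨u, hu⟩ := hu
    have h3 : (1 : R) - a*c = 1 := by
      calc (1:R) - a*c = (↑u⁻¹ * ↑u) * (1 - a*c) := by rw [u.inv_mul, one_mul]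
      _ = ↑u⁻¹ * ((1-a*c) * (1-a*c)) := by rw [hu, mul_assoc]
      _ = ↑u⁻¹ * (1-a*c) := by rw [h2]
      _ = 1 := by rw [← hu, u.inv_mul]
    have hac0 : a * c = 0 := by
      have := sub_eq_self.mp h3
      simpa using this
    have ha0 : a = 0 := by
      calc a = a * (c * a) := by rw [hca, mul_one]
      _ = (a * c) * a := by rw [mul_assoc]
      _ = 0 := by rw [hac0, zero_mul]
    have : (1 : R) = 0 := by rw [← hca, ha0, mul_zero]
    exact one_ne_zero this

lemma aux_nonunits_add (hloc : ∀ x : R, IsUnit x ∨ IsUnit (1 - x))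
    {a b : R} (ha : ¬ IsUnit a) (hb : ¬ IsUnit b) : ¬ IsUnit (a + b) := by
  rintro ⟨u, hu⟩
  have hsum : a * ↑u⁻¹ + b * ↑u⁻¹ = 1 := by rw [← add_mul, ← hu, u.mul_inv]
  rcases hloc (a * ↑u⁻¹) with h1 | h1
  · exact ha (by simpa [u.inv_mul_cancel_right] using h1.mul u.isUnit)
  · rw [show (1:R) - a * ↑u⁻¹ = b * ↑u⁻¹ from (eq_sub_of_add_eq' hsum).symm] at h1
    exact hb (by simpa [u.inv_mul_cancel_right] using h1.mul u.isUnit)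

end Aux

/-- If the unit graph of a ring `R` is complete `r`-partite for some `r ≥ 1`, then
`R` is a local ring: it has exactly one maximal left ideal, and for every `x : R`
either `x` or `1 - x` is a unit. -/
theorem localRing_of_unitGraph_completeRPartite (R : Type*) [Ring R] [Nontrivial R]
    (r : ℕ) (hr : 0 < r) (h : IsCompleteRPartite (unitGraph R) r) :
    (∃! m : Ideal R, m.IsMaximal) ∧ ∀ x : R, IsUnit x ∨ IsUnit (1 - x) := by
  obtain ⟨P, huniq, -, hiff⟩ := h
  -- Step 1: the local condition
  have hloc : ∀ x : R, IsUnit x ∨ IsUnit (1 - x) := by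
    intro x
    by_contra hc
    push_neg at hc
    obtain ⟨hx, hy⟩ := hc
    have hx0 : x ≠ 0 := by rintro rfl; exact hy (by simpa using isUnit_one)
    have hy0 : (1 : R) - x ≠ 0 := by
      intro h0
      exact hx (by rw [sub_eq_zero] at h0; exact h0 ▸ isUnit_one)
    by_cases hxy : x = 1 - x
    · -- then x * 2 = 2 * x = 1, so x is a unit
      have h2 : x + x = 1 := by nth_rewrite 2 [hxy]; abel
      exact hx ⟨⟨x, 2, by rw [mul_two]; exact h2, by rw [two_mul]; exact h2⟩, rfl⟩
    · -- x and 1 - x are adjacent, but both lie in the part of 0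
      obtain ⟨i0, h00, hu0⟩ := huniq 0
      obtain ⟨ix, hxx, hux⟩ := huniq x
      obtain ⟨iy, hyy, huy⟩ := huniq (1 - x)
      have hxi0 : ix = i0 := by
        by_contra hne
        have : (unitGraph R).Adj x 0 := (hiff x 0).mpr ⟨ix, i0, hne, hxx, h00⟩
        exact hx (by simpa using this.2)
      have hyi0 : iy = i0 := by
        by_contra hne
        have : (unitGraph R).Adj (1 - x) 0 := (hiff (1-x) 0).mpr ⟨iy, i0, hne, hyy, h00⟩
        exact hy (by simpa using this.2)
      have hadj : (unitGraph R).Adj x (1 - x) :=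
        ⟨hxy, by rw [add_sub_cancel]; exact isUnit_one⟩
      obtain ⟨i, j, hij, hxi, hyj⟩ := (hiff x (1 - x)).mp hadj
      exact hij (((hux i hxi).trans hxi0).trans (((huy j hyj).trans hyi0).symm))
  refine ⟨?_, hloc⟩
  -- Step 2: the nonunits form the unique maximal ideal
  have hsmul : ∀ (c : R) {a : R}, ¬ IsUnit a → ¬ IsUnit (c * a) := by
    intro c a ha hca
    obtain ⟨u, hu⟩ := hca
    exact ha (aux_isUnit_of_left_inv hloc a (↑u⁻¹ * c)
      (by rw [mul_assoc, ← hu, u.inv_mul]))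
  set m : Ideal R :=
    { carrier := {x : R | ¬ IsUnit x}
      add_mem' := fun ha hb => aux_nonunits_add hloc ha hb
      zero_mem' := by simp [isUnit_zero_iff]
      smul_mem' := fun c a ha => hsmul c ha }
  have hmem : ∀ x : R, x ∈ m ↔ ¬ IsUnit x := fun x => Iff.rfl
  have hne_top : m ≠ ⊤ := by
    intro ht
    have : (1 : R) ∈ m := ht ▸ Submodule.mem_top
    exact this isUnit_one
  have hmax : m.IsMaximal := by
    refine ⟨⟨hne_top, ?_⟩⟩
    intro I hI
    obtain ⟨x, hxI, hxm⟩ := SetLike.exists_of_lt hI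
    have hx : IsUnit x := not_not.mp hxm
    exact Ideal.eq_top_of_isUnit_mem I hxI hx
  refine ⟨m, hmax, ?_⟩
  intro J hJ
  have hle : J ≤ m := by
    intro x hxJ
    intro hx
    exact hJ.ne_top (Ideal.eq_top_of_isUnit_mem J hxJ hx)
  exact hJ.eq_of_le hne_top hle
end

section
/- Let R be a ring such that the Jacobson radical J(R) is nonzero and 2 is a unit of R. Then the unit graph G(R) is not a bipartite graph (indeed it contains a triangle: for any nonzero x in J(R), the vertices 0, 1 and 1 - x form a triangle). -/
lemma jac_left_inv {R : Type*} [Ring R] {a : R} (ha : a ∈ ringJacobson R) :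
    ∃ z, z * (a + 1) = 1 := by
  have h1 : a ∈ TwoSidedIdeal.asIdeal ((⊥ : TwoSidedIdeal R).jacobson) :=
    TwoSidedIdeal.mem_asIdeal.2 ha
  rw [TwoSidedIdeal.asIdeal_jacobson] at h1
  obtain ⟨z, hz⟩ := Ideal.mem_jacobson_iff.1 h1 1
  refine ⟨z, ?_⟩
  have hz0 : z * 1 * a + z - 1 = 0 :=
    (TwoSidedIdeal.mem_bot _).1 (TwoSidedIdeal.mem_asIdeal.1 hz)
  rw [mul_one] at hz0
  calc z * (a + 1) = z * a + z - 1 + 1 := by noncomm_ring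
    _ = 1 := by rw [hz0, zero_add]

lemma jac_unit {R : Type*} [Ring R] {x : R} (hx : x ∈ ringJacobson R) (y : R) :
    IsUnit (x * y + 1) := by
  have ha : x * y ∈ ringJacobson R := TwoSidedIdeal.mul_mem_right _ _ _ hx
  obtain ⟨z, hz⟩ := jac_left_inv ha
  have hzmem : -(z * (x * y)) ∈ ringJacobson R :=
    TwoSidedIdeal.neg_mem _ (TwoSidedIdeal.mul_mem_left _ _ _ ha)
  obtain ⟨u, hu⟩ := jac_left_inv hzmem
  have hsum : z * (x * y) + z = 1 := by rw [← hz]; noncomm_ring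
  have hz' : -(z * (x * y)) + 1 = z := by rw [← hsum]; abel
  rw [hz'] at hu
  have huval : u = x * y + 1 := by
    calc u = u * (z * (x * y + 1)) := by rw [hz, mul_one]
      _ = (u * z) * (x * y + 1) := by rw [mul_assoc]
      _ = x * y + 1 := by rw [hu, one_mul]
  have hvz : (x * y + 1) * z = 1 := by rw [← huval]; exact hu
  exact ⟨⟨x * y + 1, z, hvz, hz⟩, rfl⟩

/-- If the Jacobson radical of `R` is nonzero and `2` is a unit of `R`, then the unit
graph `G(R)` is not bipartite; indeed for any nonzero `x ∈ J(R)` the vertices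
`0`, `1` and `1 - x` form a triangle. -/
theorem unitGraph_not_bipartite_of_jacobson_ne_bot (R : Type*) [Ring R]
    (hJ : ringJacobson R ≠ ⊥) (h2 : IsUnit (2 : R)) :
    ¬ (unitGraph R).Colorable 2 ∧
      ∀ x : R, x ∈ ringJacobson R → x ≠ 0 →
        (unitGraph R).Adj 0 1 ∧ (unitGraph R).Adj 1 (1 - x) ∧
          (unitGraph R).Adj (1 - x) 0 := by
  obtain ⟨x, hxJ, hx0⟩ : ∃ x ∈ ringJacobson R, x ≠ 0 := by
    by_contra h
    push_neg at h
    exact hJ (eq_bot_iff.2 fun y hy => (TwoSidedIdeal.mem_bot _).2 (h y hy))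
  haveI : Nontrivial R := ⟨x, 0, hx0⟩
  have key : ∀ x : R, x ∈ ringJacobson R → x ≠ 0 →
        (unitGraph R).Adj 0 1 ∧ (unitGraph R).Adj 1 (1 - x) ∧
          (unitGraph R).Adj (1 - x) 0 := by
    intro x hxJ hx0
    refine ⟨⟨zero_ne_one, by simpa using isUnit_one⟩, ?_, ?_⟩
    · constructor
      · intro h
        exact hx0 (sub_eq_self.mp h.symm)
      · have h1 : IsUnit (x * (-(↑h2.unit⁻¹ : R)) + 1) := jac_unit hxJ _
        have heq : (x * (-(↑h2.unit⁻¹ : R)) + 1) * 2 = 1 + (1 - x) := by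
          have hu : (↑h2.unit⁻¹ : R) * 2 = 1 := by
            simpa using h2.unit.inv_mul
          rw [add_mul, mul_assoc, neg_mul, hu]
          noncomm_ring
        rw [← heq]
        exact h1.mul h2
    · refine ⟨?_, ?_⟩
      · intro h
        have hx1 : (1 : R) = x := sub_eq_zero.mp h
        have hu := jac_unit hxJ (-1)
        rw [← hx1] at hu
        simp at hu
      · have heq : (1 : R) - x + 0 = x * (-1) + 1 := by noncomm_ring
        rw [heq]
        exact jac_unit hxJ (-1)
  refine ⟨?_, key⟩
  rintro ⟨C⟩
  obtain ⟨h01, h12, h20⟩ := key x hxJ hx0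
  have c1 := C.valid h01
  have c2 := C.valid h12
  have c3 := C.valid h20
  have hpig : ∀ a b c : Fin 2, a ≠ b → b ≠ c → c ≠ a → False := by decide
  exact hpig (C 0) (C 1) (C (1 - x)) c1 c2 c3
end

section
/- Let D be a division ring and n ≥ 2 a natural number. Then the unit graph G(M_n(D)) of the ring of n × n matrices over D contains a triangle, i.e., there exist three pairwise adjacent vertices; in particular G(M_n(D)) is not bipartite. -/
section Aux

/-- Base case 2×2: the companion matrix `u` of `x² + x + 1` satisfies `u³ = 1` and
`1 + u = -u²`, so both `u` and `1 + u` are units over every ring. -/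
private lemma unitPair_two (R : Type*) [Ring R] [Nontrivial R] :
    ∃ u : Matrix (Fin 2) (Fin 2) R, IsUnit u ∧ IsUnit (1 + u) ∧ u ≠ 1 := by
  refine ⟨!![0, -1; 1, -1],
    ⟨⟨!![0, -1; 1, -1], !![-1, 1; -1, 0], ?_, ?_⟩, rfl⟩,
    ⟨⟨1 + !![0, -1; 1, -1], !![0, 1; -1, 1], ?_, ?_⟩, rfl⟩, ?_⟩
  · ext i j
    fin_cases i <;> fin_cases j <;>
      simp [Matrix.mul_apply, Fin.sum_univ_succ, Matrix.one_apply]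
  · ext i j
    fin_cases i <;> fin_cases j <;>
      simp [Matrix.mul_apply, Fin.sum_univ_succ, Matrix.one_apply]
  · ext i j
    fin_cases i <;> fin_cases j <;>
      simp [Matrix.mul_apply, Fin.sum_univ_succ, Matrix.one_apply]
  · ext i j
    fin_cases i <;> fin_cases j <;>
      simp [Matrix.mul_apply, Fin.sum_univ_succ, Matrix.one_apply]
  · intro h
    have := congrFun (congrFun h 0) 0
    simp [Matrix.one_apply] at this

/-- Base case 3×3: the companion matrix of `x³ + x + 1`; both it and its successor
are unimodular over `ℤ`, hence invertible over every ring. -/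
private lemma unitPair_three (R : Type*) [Ring R] [Nontrivial R] :
    ∃ u : Matrix (Fin 3) (Fin 3) R, IsUnit u ∧ IsUnit (1 + u) ∧ u ≠ 1 := by
  refine ⟨!![0, 0, -1; 1, 0, -1; 0, 1, 0],
    ⟨⟨!![0, 0, -1; 1, 0, -1; 0, 1, 0], !![-1, 1, 0; 0, 0, 1; -1, 0, 0], ?_, ?_⟩, rfl⟩,
    ⟨⟨1 + !![0, 0, -1; 1, 0, -1; 0, 1, 0], !![2, -1, 1; -1, 1, 0; 1, -1, 1], ?_, ?_⟩, rfl⟩, ?_⟩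
  · ext i j
    fin_cases i <;> fin_cases j <;>
      simp [Matrix.mul_apply, Fin.sum_univ_succ, Matrix.one_apply]
  · ext i j
    fin_cases i <;> fin_cases j <;>
      simp [Matrix.mul_apply, Fin.sum_univ_succ, Matrix.one_apply]
  · have e1 : (1 : Matrix (Fin 3) (Fin 3) R) + !![0, 0, -1; 1, 0, -1; 0, 1, 0]
        = !![1, 0, -1; 1, 1, -1; 0, 1, 1] := by
      rw [Matrix.one_fin_three]
      ext i j
      fin_cases i <;> fin_cases j <;>
        simp [Matrix.vecHead, Matrix.vecTail]
    rw [e1, Matrix.mul_fin_three, Matrix.one_fin_three]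
    ext i j
    fin_cases i <;> fin_cases j <;> norm_num
  · have e1 : (1 : Matrix (Fin 3) (Fin 3) R) + !![0, 0, -1; 1, 0, -1; 0, 1, 0]
        = !![1, 0, -1; 1, 1, -1; 0, 1, 1] := by
      rw [Matrix.one_fin_three]
      ext i j
      fin_cases i <;> fin_cases j <;>
        simp [Matrix.vecHead, Matrix.vecTail]
    rw [e1, Matrix.mul_fin_three, Matrix.one_fin_three]
    ext i j
    fin_cases i <;> fin_cases j <;> norm_num
  · intro h
    have := congrFun (congrFun h 0) 0
    simp [Matrix.one_apply] at this

/-- A block diagonal matrix built from two units is a unit. -/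
private lemma blockUnit (R : Type*) [Ring R] {m n : Type*} [Fintype m] [Fintype n]
    [DecidableEq m] [DecidableEq n]
    {a : Matrix m m R} {b : Matrix n n R}
    (ha : IsUnit a) (hb : IsUnit b) : IsUnit (Matrix.fromBlocks a 0 0 b) := by
  obtain ⟨U, rfl⟩ := ha
  obtain ⟨V, rfl⟩ := hb
  have key : ∀ (P : (Matrix m m R)ˣ) (Q : (Matrix n n R)ˣ),
      Matrix.fromBlocks (Units.val P) (0 : Matrix m n R) (0 : Matrix n m R) (Units.val Q) *
        Matrix.fromBlocks (Units.val P⁻¹) (0 : Matrix m n R) (0 : Matrix n m R) (Units.val Q⁻¹)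
        = 1 := by
    intro P Q
    rw [Matrix.fromBlocks_multiply]
    rw [show Units.val P * Units.val P⁻¹ = 1 from P.mul_inv,
        show Units.val Q * Units.val Q⁻¹ = 1 from Q.mul_inv]
    simp only [Matrix.zero_mul, Matrix.mul_zero, add_zero, zero_add, Matrix.fromBlocks_one]
  have h2 := key U⁻¹ V⁻¹
  rw [inv_inv, inv_inv] at h2
  exact ⟨⟨_, _, key U V, h2⟩, rfl⟩

/-- Induction step: glue a known pair in size `k` with the 2×2 block. -/
private lemma unitPair_step (R : Type*) [Ring R] [Nontrivial R] (k : ℕ)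
    (h : ∃ u : Matrix (Fin k) (Fin k) R, IsUnit u ∧ IsUnit (1 + u) ∧ u ≠ 1) :
    ∃ u : Matrix (Fin (k + 2)) (Fin (k + 2)) R, IsUnit u ∧ IsUnit (1 + u) ∧ u ≠ 1 := by
  obtain ⟨u, hu, hu1, hne⟩ := h
  obtain ⟨v, hv, hv1, hvne⟩ := unitPair_two R
  -- the reindexing ring equivalence `Matrix (Fin k ⊕ Fin 2) ≃ Matrix (Fin (k+2))`
  let f := Matrix.reindexAlgEquiv ℕ R (finSumFinEquiv : Fin k ⊕ Fin 2 ≃ Fin (k + 2))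
  refine ⟨f (Matrix.fromBlocks u 0 0 v), ?_, ?_, ?_⟩
  · exact IsUnit.map f (blockUnit R hu hv)
  · have h1 : (1 : Matrix (Fin (k+2)) (Fin (k+2)) R) + f (Matrix.fromBlocks u 0 0 v)
        = f (Matrix.fromBlocks (1 + u) 0 0 (1 + v)) := by
      have : (1 : Matrix (Fin k ⊕ Fin 2) (Fin k ⊕ Fin 2) R) + Matrix.fromBlocks u 0 0 v
          = Matrix.fromBlocks (1 + u) 0 0 (1 + v) := by
        rw [← Matrix.fromBlocks_one, Matrix.fromBlocks_add, add_zero, add_zero]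
      rw [← this, map_add, map_one]
    rw [h1]
    exact IsUnit.map f (blockUnit R hu1 hv1)
  · intro hcon
    apply hne
    have h1 : Matrix.fromBlocks u 0 0 v = (1 : Matrix (Fin k ⊕ Fin 2) (Fin k ⊕ Fin 2) R) := by
      have := congrArg f.symm hcon
      rwa [AlgEquiv.symm_apply_apply, map_one] at this
    have := congrArg Matrix.toBlocks₁₁ (h1.trans Matrix.fromBlocks_one.symm)
    rwa [Matrix.toBlocks_fromBlocks₁₁, Matrix.toBlocks_fromBlocks₁₁] at this

/-- For every `n`, there is a unit `u` in `M_{n+2}(R)` with `1 + u` also a unit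
and `u ≠ 1`. -/
private lemma unitPair (R : Type*) [Ring R] [Nontrivial R] :
    ∀ n : ℕ, ∃ u : Matrix (Fin (n + 2)) (Fin (n + 2)) R, IsUnit u ∧ IsUnit (1 + u) ∧ u ≠ 1
  | 0 => unitPair_two R
  | 1 => unitPair_three R
  | (m + 2) => unitPair_step R (m + 2) (unitPair R m)

end Aux

/-- For a division ring `D` and `n ≥ 2`, the unit graph of the matrix ring `M_n(D)`
contains a triangle; in particular it is not bipartite. -/
theorem unitGraph_matrix_contains_triangle (D : Type*) [DivisionRing D] (n : ℕ)
    (hn : 2 ≤ n) :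
    (∃ A B C : Matrix (Fin n) (Fin n) D,
        (unitGraph (Matrix (Fin n) (Fin n) D)).Adj A B ∧
        (unitGraph (Matrix (Fin n) (Fin n) D)).Adj B C ∧
        (unitGraph (Matrix (Fin n) (Fin n) D)).Adj A C) ∧
      ¬ (unitGraph (Matrix (Fin n) (Fin n) D)).Colorable 2 := by
  obtain ⟨m, rfl⟩ : ∃ m, n = m + 2 := ⟨n - 2, by omega⟩
  obtain ⟨u, hu, hu1, hne⟩ := unitPair D m
  have hAdj01 : (unitGraph (Matrix (Fin (m+2)) (Fin (m+2)) D)).Adj 0 1 :=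
    ⟨zero_ne_one, by rw [zero_add]; exact isUnit_one⟩
  have hAdj1u : (unitGraph (Matrix (Fin (m+2)) (Fin (m+2)) D)).Adj 1 u :=
    ⟨fun h => hne h.symm, hu1⟩
  have hAdj0u : (unitGraph (Matrix (Fin (m+2)) (Fin (m+2)) D)).Adj 0 u :=
    ⟨fun h => hu.ne_zero h.symm, by rwa [zero_add]⟩
  refine ⟨⟨0, 1, u, hAdj01, hAdj1u, hAdj0u⟩, ?_⟩
  intro hc
  classical
  have hcf : (unitGraph (Matrix (Fin (m+2)) (Fin (m+2)) D)).CliqueFree 3 :=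
    hc.cliqueFree (by norm_num)
  exact hcf {0, 1, u} (SimpleGraph.is3Clique_triple_iff.mpr ⟨hAdj01, hAdj0u, hAdj1u⟩)
end
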